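/- arXiv:2512.23943 — 5 statements merged into one kernel-verified Lean document; each statement's English description precedes it below -/
import Mathlib

section
/- Let U_1, U_2, ... be i.i.d. random variables uniformly distributed on [0,1], and let V_t = min_{s ≤ t} U_s. Define M_t^U = ∫_0^{V_t} (1−θ)^{−t} dθ. Then (M_t^U)_{t≥1} is a nonnegative martingale with respect to the natural filtration generated by (U_t), with E[M_1^U] = 1. -/
open MeasureTheory ProbabilityTheory

open scoped ENNReal

/-- The running minimum `Y_t = min_{1 ≤ s ≤ t} X_s`. -/
noncomputable def runMin {Ω : Type*} (X : ℕ → Ω → ℝ) (t : ℕ) (ω : Ω) : ℝ :=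
  sInf ((fun s => X s ω) '' Set.Icc 1 t)

section AuxRunMin

variable {Ω : Type*}

lemma runMin_one (X : ℕ → Ω → ℝ) (ω : Ω) : runMin X 1 ω = X 1 ω := by
  simp [runMin, Set.Icc_self]

lemma runMin_succ (X : ℕ → Ω → ℝ) {n : ℕ} (hn : 1 ≤ n) (ω : Ω) :
    runMin X (n + 1) ω = min (runMin X n ω) (X (n + 1) ω) := by
  have h : Set.Icc 1 (n+1) = insert (n+1) (Set.Icc 1 n) := by
    ext k; simp [Set.mem_Icc]; omega
  rw [runMin, h, Set.image_insert_eq, csInf_insert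
    (((Set.finite_Icc 1 n).image _).bddBelow)
    ((Set.nonempty_Icc.2 hn).image _)]
  rw [min_comm]; rfl

lemma runMin_le (X : ℕ → Ω → ℝ) {n s : ℕ} (h1 : 1 ≤ s) (h2 : s ≤ n) (ω : Ω) :
    runMin X n ω ≤ X s ω :=
  csInf_le (((Set.finite_Icc 1 n).image _).bddBelow) ⟨s, ⟨h1, h2⟩, rfl⟩

lemma runMin_measurable {m : MeasurableSpace Ω} (X : ℕ → Ω → ℝ) {n : ℕ} (hn : 1 ≤ n)
    (hX : ∀ s, 1 ≤ s → s ≤ n → Measurable[m] (X s)) :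
    Measurable[m] (runMin X n) := by
  induction n, hn using Nat.le_induction with
  | base =>
      have h : runMin X 1 = X 1 := funext fun ω => runMin_one X ω
      rw [h]; exact hX 1 le_rfl le_rfl
  | succ n hn ih =>
      have h : runMin X (n+1) = fun ω => min (runMin X n ω) (X (n + 1) ω) :=
        funext fun ω => runMin_succ X hn ω
      rw [h]
      exact Measurable.min (ih fun s h1 h2 => hX s h1 (h2.trans (Nat.le_succ n)))
        (hX (n+1) (by omega) le_rfl)

end AuxRunMin

section AuxIntegrand

lemma mix_not_integrableOn_inv_one_sub :
    ¬ IntegrableOn (fun θ : ℝ => (1 - θ)⁻¹) (Set.Ioo 0 1) := by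
  intro h
  have hemb : MeasurableEmbedding (fun θ : ℝ => 1 - θ) :=
    (MeasurableEquiv.subLeft (1:ℝ)).measurableEmbedding
  have hmp : MeasurePreserving (fun θ : ℝ => 1 - θ) volume volume :=
    Measure.measurePreserving_sub_left volume 1
  have hpre : (fun θ : ℝ => 1 - θ) ⁻¹' (Set.Ioo 0 1) = Set.Ioo 0 1 := by
    ext θ; simp only [Set.mem_preimage, Set.mem_Ioo]
    constructor <;> intro h <;> exact ⟨by linarith [h.1, h.2], by linarith [h.1, h.2]⟩
  have h' : IntegrableOn ((fun x : ℝ => x⁻¹) ∘ (fun θ : ℝ => 1 - θ)) (Set.Ioo 0 1) := h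
  rw [← hpre] at h'
  have h2 : IntegrableOn (fun x : ℝ => x⁻¹) (Set.Ioo 0 1) :=
    (hmp.integrableOn_comp_preimage hemb).1 h'
  have h3 : IntegrableOn (fun x : ℝ => x ^ (-1 : ℝ)) (Set.Ioo 0 1) := by
    refine h2.congr_fun (fun x hx => ?_) measurableSet_Ioo
    rw [Real.rpow_neg_one]
  rw [intervalIntegral.integrableOn_Ioo_rpow_iff zero_lt_one] at h3
  linarith

lemma mix_integrand_nonneg_of_le_one {t : ℕ} {x : ℝ} (hx : x ≤ 1) :
    ∀ θ ∈ Set.Ioc (0:ℝ) x, 0 ≤ ((1 - θ) ^ t)⁻¹ := fun θ hθ =>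
  inv_nonneg.2 (pow_nonneg (by linarith [hθ.2]) t)

lemma mix_integral_nonneg (t : ℕ) (x : ℝ) :
    0 ≤ ∫ θ in Set.Ioc (0:ℝ) x, ((1 - θ) ^ t)⁻¹ := by
  by_cases hx : x ≤ 1
  · exact setIntegral_nonneg measurableSet_Ioc (mix_integrand_nonneg_of_le_one hx)
  push_neg at hx
  rcases Nat.eq_zero_or_pos t with ht | ht
  · subst ht
    exact setIntegral_nonneg measurableSet_Ioc (fun θ _ => by norm_num)
  rw [integral_undef]; intro h
  have h1 : IntegrableOn (fun θ : ℝ => ((1 - θ) ^ t)⁻¹) (Set.Ioo 0 1) :=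
    IntegrableOn.mono_set h (fun θ hθ => ⟨hθ.1, hθ.2.le.trans hx.le⟩)
  apply mix_not_integrableOn_inv_one_sub
  refine Integrable.mono h1 ?_ ?_
  · exact Measurable.aestronglyMeasurable ((measurable_const.sub measurable_id).inv)
  · filter_upwards [ae_restrict_mem measurableSet_Ioo] with θ hθ
    have ha : 0 < 1 - θ := by linarith [hθ.2]
    have ha1 : 1 - θ ≤ 1 := by linarith [hθ.1]
    rw [Real.norm_eq_abs, Real.norm_eq_abs, abs_of_pos (inv_pos.2 ha),
      abs_of_pos (inv_pos.2 (pow_pos ha t))]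
    exact one_div_le_one_div_of_le (pow_pos ha t)
      (by calc (1-θ)^t ≤ (1-θ)^1 := pow_le_pow_of_le_one ha.le ha1 ht
             _ = 1 - θ := pow_one _)
      |>.trans_eq (by rw [one_div]) |>.trans_eq' (by rw [one_div])

lemma mix_integrableOn {t : ℕ} {x : ℝ} (hx : x < 1) :
    IntegrableOn (fun θ : ℝ => ((1 - θ) ^ t)⁻¹) (Set.Ioc 0 x) := by
  rcases le_or_gt x 0 with h0 | h0
  · rw [Set.Ioc_eq_empty (fun h => absurd (h.trans_le h0) (lt_irrefl 0))]
    exact integrableOn_empty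
  have h : IntegrableOn (fun θ : ℝ => ((1 - θ) ^ t)⁻¹) (Set.Icc 0 x) := by
    apply ContinuousOn.integrableOn_compact isCompact_Icc
    apply ContinuousOn.inv₀ (Continuous.continuousOn (by continuity))
    intro θ hθ
    exact pow_ne_zero t (by simp only [Set.mem_Icc] at hθ; intro h; nlinarith [hθ.2])
  exact h.mono_set Set.Ioc_subset_Icc_self

end AuxIntegrand

section AuxMeasurability

lemma mix_stronglyMeasurable {Ω : Type*} {m : MeasurableSpace Ω} {V : Ω → ℝ}
    (hV : Measurable[m] V) (t : ℕ) :
    StronglyMeasurable[m] (fun ω => ∫ θ in Set.Ioc (0:ℝ) (V ω), ((1 - θ) ^ t)⁻¹) := by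
  have h1 : ∀ ω, (∫ θ in Set.Ioc (0:ℝ) (V ω), ((1 - θ) ^ t)⁻¹)
      = ∫ θ, (Set.Ioc (0:ℝ) (V ω)).indicator (fun θ => ((1 - θ) ^ t)⁻¹) θ := fun ω =>
    (integral_indicator measurableSet_Ioc).symm
  simp only [h1]
  apply StronglyMeasurable.integral_prod_right
    (f := fun ω θ => (Set.Ioc (0:ℝ) (V ω)).indicator (fun θ => ((1 - θ) ^ t)⁻¹) θ)
  have h2 : (Function.uncurry fun ω θ => (Set.Ioc (0:ℝ) (V ω)).indicator
      (fun θ => ((1 - θ) ^ t)⁻¹) θ)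
      = Set.indicator {p : Ω × ℝ | 0 < p.2 ∧ p.2 ≤ V p.1} (fun p => ((1 - p.2) ^ t)⁻¹) := by
    ext p
    simp only [Function.uncurry, Set.indicator, Set.mem_Ioc, Set.mem_setOf_eq]
  rw [h2]
  refine Measurable.stronglyMeasurable (Measurable.indicator ?_ ?_)
  · exact ((measurable_const.sub measurable_snd).pow_const t).inv
  · exact MeasurableSet.inter (measurableSet_lt measurable_const measurable_snd)
      (measurableSet_le measurable_snd (hV.comp measurable_fst))

end AuxMeasurability

section AuxKey

/-- The key lintegral representation of the mixture integral. -/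
lemma mix_key_lintegral {Ω : Type*} [MeasurableSpace Ω] (P : Measure Ω) [IsProbabilityMeasure P]
    {V : Ω → ℝ} (hV : Measurable V) (hV1 : ∀ᵐ ω ∂P, V ω < 1) (t : ℕ) (A : Set Ω) :
    ∫⁻ ω in A, ENNReal.ofReal (∫ θ in Set.Ioc (0:ℝ) (V ω), ((1 - θ) ^ t)⁻¹) ∂P
      = ∫⁻ θ in Set.Ioc (0:ℝ) 1,
          ENNReal.ofReal (((1 - θ) ^ t)⁻¹) * P (A ∩ {ω | θ ≤ V ω}) := by
  set F : Ω → ℝ → ℝ≥0∞ := fun ω θ =>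
    ENNReal.ofReal (((1 - θ) ^ t)⁻¹) * Set.indicator {ω' : Ω | θ ≤ V ω'} (fun _ => 1) ω with hF
  have step1 : ∀ᵐ ω ∂P, ENNReal.ofReal (∫ θ in Set.Ioc (0:ℝ) (V ω), ((1 - θ) ^ t)⁻¹)
      = ∫⁻ θ in Set.Ioc (0:ℝ) 1, F ω θ := by
    filter_upwards [hV1] with ω hω
    rw [ofReal_integral_eq_lintegral_ofReal (mix_integrableOn hω)
      ((ae_restrict_mem measurableSet_Ioc).mono fun θ hθ =>
        mix_integrand_nonneg_of_le_one hω.le θ hθ)]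
    have hset : Set.Ioc (0:ℝ) (V ω) = Set.Ioc (0:ℝ) 1 ∩ Set.Iic (V ω) := by
      rw [Set.Ioc_inter_Iic, min_eq_right hω.le]
    have hpt : ∀ θ : ℝ, F ω θ
        = Set.indicator (Set.Iic (V ω)) (fun θ => ENNReal.ofReal (((1 - θ) ^ t)⁻¹)) θ := by
      intro θ
      by_cases h : θ ≤ V ω <;>
        simp [hF, Set.indicator, h, Set.mem_setOf_eq, Set.mem_Iic]
    calc ∫⁻ θ in Set.Ioc (0:ℝ) (V ω), ENNReal.ofReal (((1 - θ) ^ t)⁻¹)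
        = ∫⁻ θ in Set.Ioc (0:ℝ) 1 ∩ Set.Iic (V ω), ENNReal.ofReal (((1 - θ) ^ t)⁻¹) := by
          rw [← hset]
      _ = ∫⁻ θ in Set.Ioc (0:ℝ) 1, Set.indicator (Set.Iic (V ω))
            (fun θ => ENNReal.ofReal (((1 - θ) ^ t)⁻¹)) θ := by
          rw [lintegral_indicator measurableSet_Iic, Measure.restrict_restrict measurableSet_Iic,
            Set.inter_comm]
      _ = ∫⁻ θ in Set.Ioc (0:ℝ) 1, F ω θ := lintegral_congr fun θ => (hpt θ).symm
  have hFmeas : AEMeasurable (Function.uncurry F)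
      ((P.restrict A).prod (volume.restrict (Set.Ioc (0:ℝ) 1))) := by
    apply Measurable.aemeasurable
    apply Measurable.mul
    · exact ENNReal.measurable_ofReal.comp (((measurable_const.sub measurable_snd).pow_const t).inv)
    · have h : (fun p : Ω × ℝ => Set.indicator {ω' : Ω | p.2 ≤ V ω'} (fun _ => (1:ℝ≥0∞)) p.1)
          = Set.indicator {p : Ω × ℝ | p.2 ≤ V p.1} (fun _ => 1) := by
        ext p; by_cases h : p.2 ≤ V p.1 <;> simp [Set.indicator, h]
      show Measurable fun p : Ω × ℝ => Set.indicator {ω' : Ω | p.2 ≤ V ω'} (fun _ => (1:ℝ≥0∞)) p.1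
      rw [h]
      exact measurable_const.indicator (measurableSet_le measurable_snd (hV.comp measurable_fst))
  calc ∫⁻ ω in A, ENNReal.ofReal (∫ θ in Set.Ioc (0:ℝ) (V ω), ((1 - θ) ^ t)⁻¹) ∂P
      = ∫⁻ ω in A, (∫⁻ θ in Set.Ioc (0:ℝ) 1, F ω θ) ∂P :=
        lintegral_congr_ae (ae_restrict_of_ae step1)
    _ = ∫⁻ θ in Set.Ioc (0:ℝ) 1, ∫⁻ ω in A, F ω θ ∂P := lintegral_lintegral_swap hFmeas
    _ = ∫⁻ θ in Set.Ioc (0:ℝ) 1, ENNReal.ofReal (((1 - θ) ^ t)⁻¹) * P (A ∩ {ω | θ ≤ V ω}) := by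
        apply lintegral_congr fun θ => ?_
        rw [lintegral_const_mul _
          (measurable_const.indicator (measurableSet_le measurable_const hV))]
        congr 1
        have h : ∀ ω : Ω, Set.indicator {ω' : Ω | θ ≤ V ω'} (fun _ => (1:ℝ≥0∞)) ω
            = Set.indicator {ω' : Ω | θ ≤ V ω'} 1 ω := fun ω => rfl
        simp only [h]
        rw [lintegral_indicator_one (measurableSet_le measurable_const hV),
          Measure.restrict_apply (measurableSet_le measurable_const hV), Set.inter_comm]

end AuxKey

section AuxProb

variable {Ω : Type*} [MeasurableSpace Ω]

lemma mix_unif_Ici (P : Measure Ω) (U : ℕ → Ω → ℝ) (hmeas : ∀ i, Measurable (U i))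
    (hunif : ∀ i, Measure.map (U i) P = volume.restrict (Set.Icc (0 : ℝ) 1))
    {i : ℕ} {θ : ℝ} (h0 : 0 ≤ θ) :
    P (U i ⁻¹' Set.Ici θ) = ENNReal.ofReal (1 - θ) := by
  rw [← Measure.map_apply (hmeas i) measurableSet_Ici, hunif i,
    Measure.restrict_apply measurableSet_Ici]
  have h : Set.Ici θ ∩ Set.Icc (0:ℝ) 1 = Set.Icc θ 1 := by
    ext x; simp only [Set.mem_inter_iff, Set.mem_Ici, Set.mem_Icc]
    constructor
    · rintro ⟨h, _, h2⟩; exact ⟨h, h2⟩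
    · rintro ⟨h, h2⟩; exact ⟨h, h0.trans h, h2⟩
  rw [h, Real.volume_Icc]

lemma mix_unif_lt_one (P : Measure Ω) (U : ℕ → Ω → ℝ) (hmeas : ∀ i, Measurable (U i))
    (hunif : ∀ i, Measure.map (U i) P = volume.restrict (Set.Icc (0 : ℝ) 1)) (i : ℕ) :
    ∀ᵐ ω ∂P, U i ω < 1 := by
  rw [ae_iff]
  have hset : {ω | ¬ U i ω < 1} = U i ⁻¹' Set.Ici 1 := by
    ext ω; simp [not_lt]
  rw [hset, ← Measure.map_apply (hmeas i) measurableSet_Ici, hunif i,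
    Measure.restrict_apply measurableSet_Ici]
  have h : Set.Ici (1:ℝ) ∩ Set.Icc (0:ℝ) 1 = {1} := by
    ext x; simp only [Set.mem_inter_iff, Set.mem_Ici, Set.mem_Icc, Set.mem_singleton_iff]
    constructor
    · rintro ⟨h, _, h2⟩; linarith
    · rintro rfl; norm_num
  rw [h]; exact measure_singleton 1

lemma mix_meas_U_filtration (U : ℕ → Ω → ℝ) {n s : ℕ} (h1 : 1 ≤ s) (h2 : s ≤ n) :
    Measurable[⨆ j ∈ Set.Icc 1 n, MeasurableSpace.comap (U j) inferInstance] (U s) :=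
  Measurable.of_comap_le (le_iSup₂ (f := fun j (_ : j ∈ Set.Icc 1 n) =>
    MeasurableSpace.comap (U j) inferInstance) s ⟨h1, h2⟩)

lemma mix_measV (U : ℕ → Ω → ℝ) {n : ℕ} (hn : 1 ≤ n) :
    Measurable[⨆ j ∈ Set.Icc 1 n, MeasurableSpace.comap (U j) inferInstance] (runMin U n) :=
  runMin_measurable U hn fun _ h1 h2 => mix_meas_U_filtration U h1 h2

lemma mix_indep_step (P : Measure Ω) [IsProbabilityMeasure P] (U : ℕ → Ω → ℝ)
    (hmeas : ∀ i, Measurable (U i)) (hindep : iIndepFun U P)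
    {n t : ℕ} (h : t ∉ Set.Icc 1 n) :
    Indep (⨆ j ∈ Set.Icc 1 n, MeasurableSpace.comap (U j) inferInstance)
      (MeasurableSpace.comap (U t) inferInstance) P := by
  have h2 := indep_biSup_compl (fun i => (hmeas i).comap_le) hindep.iIndep (Set.Icc 1 n)
  exact indep_of_indep_of_le_right h2
    (le_iSup₂ (f := fun i (_ : i ∈ (Set.Icc 1 n)ᶜ) =>
      MeasurableSpace.comap (U i) inferInstance) t h)

lemma mix_factor_step (P : Measure Ω) [IsProbabilityMeasure P] (U : ℕ → Ω → ℝ)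
    (hmeas : ∀ i, Measurable (U i)) (hindep : iIndepFun U P)
    (hunif : ∀ i, Measure.map (U i) P = volume.restrict (Set.Icc (0 : ℝ) 1))
    {n : ℕ} (hn : 1 ≤ n) {θ : ℝ} (h0 : 0 ≤ θ) {A : Set Ω}
    (hA : MeasurableSet[⨆ j ∈ Set.Icc 1 n, MeasurableSpace.comap (U j) inferInstance] A) :
    P (A ∩ {ω | θ ≤ runMin U (n+1) ω})
      = P (A ∩ {ω | θ ≤ runMin U n ω}) * ENNReal.ofReal (1 - θ) := by
  have hsplit : {ω | θ ≤ runMin U (n+1) ω}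
      = {ω | θ ≤ runMin U n ω} ∩ (U (n+1) ⁻¹' Set.Ici θ) := by
    ext ω
    simp only [Set.mem_setOf_eq, Set.mem_inter_iff, Set.mem_preimage, Set.mem_Ici,
      runMin_succ U hn ω, le_min_iff]
  rw [hsplit, ← Set.inter_assoc]
  have hindep' := mix_indep_step P U hmeas hindep (n := n) (t := n+1) (by simp)
  rw [Indep_iff] at hindep'
  have hm1 : MeasurableSet[⨆ j ∈ Set.Icc 1 n, MeasurableSpace.comap (U j) inferInstance]
      (A ∩ {ω | θ ≤ runMin U n ω}) := hA.inter ((mix_measV U hn) measurableSet_Ici)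
  have h2 := hindep' _ _ hm1 ⟨Set.Ici θ, measurableSet_Ici, rfl⟩
  rw [h2, mix_unif_Ici P U hmeas hunif h0]

lemma mix_prob_V (P : Measure Ω) [IsProbabilityMeasure P] (U : ℕ → Ω → ℝ)
    (hmeas : ∀ i, Measurable (U i)) (hindep : iIndepFun U P)
    (hunif : ∀ i, Measure.map (U i) P = volume.restrict (Set.Icc (0 : ℝ) 1))
    {t : ℕ} (ht : 1 ≤ t) {θ : ℝ} (h0 : 0 ≤ θ) :
    P {ω | θ ≤ runMin U t ω} = ENNReal.ofReal (1 - θ) ^ t := by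
  induction t, ht using Nat.le_induction with
  | base =>
      have h : {ω | θ ≤ runMin U 1 ω} = U 1 ⁻¹' Set.Ici θ := by
        ext ω; simp [runMin_one U ω]
      rw [h, pow_one]
      exact mix_unif_Ici P U hmeas hunif h0
  | succ n hn ih =>
      have h := mix_factor_step P U hmeas hindep hunif hn h0 (A := Set.univ) MeasurableSet.univ
      rw [Set.univ_inter, Set.univ_inter] at h
      rw [h, ih, pow_succ]

end AuxProb

/-- For i.i.d. uniforms `U_1, U_2, ...` on `[0,1]` with running minimum
`V_t`, the mixture process `M_t^U = ∫_0^{V_t} (1-θ)^{-t} dθ` is a nonnegative martingale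
for the natural filtration of `(U_t)`, with `E[M_1^U] = 1`. -/
theorem mixture_process_is_martingale {Ω : Type*} [MeasurableSpace Ω] (P : Measure Ω)
    [IsProbabilityMeasure P] (U : ℕ → Ω → ℝ) (hmeas : ∀ i, Measurable (U i))
    (hindep : iIndepFun U P)
    (hunif : ∀ i, Measure.map (U i) P = volume.restrict (Set.Icc (0 : ℝ) 1))
    (M : ℕ → Ω → ℝ)
    (hM : ∀ t ω, M t ω = ∫ θ in Set.Ioc (0 : ℝ) (runMin U t ω), ((1 - θ) ^ t)⁻¹) :
    (∀ t ω, 0 ≤ M t ω) ∧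
    (∫ ω, M 1 ω ∂P) = 1 ∧
    (∀ t : ℕ, 2 ≤ t →
      P[M t | ⨆ s ∈ Set.Icc 1 (t - 1), MeasurableSpace.comap (U s) inferInstance]
        =ᵐ[P] M (t - 1)) := by
  have hMfun : ∀ t, M t = fun ω => ∫ θ in Set.Ioc (0:ℝ) (runMin U t ω), ((1 - θ) ^ t)⁻¹ :=
    fun t => funext (hM t)
  have hpos : ∀ t ω, 0 ≤ M t ω := fun t ω => by
    rw [hM t ω]; exact mix_integral_nonneg t _
  have hVmeas : ∀ t : ℕ, 1 ≤ t → Measurable (runMin U t) := fun t ht =>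
    runMin_measurable U ht fun s _ _ => hmeas s
  have hVlt : ∀ t : ℕ, 1 ≤ t → ∀ᵐ ω ∂P, runMin U t ω < 1 := fun t ht => by
    filter_upwards [mix_unif_lt_one P U hmeas hunif t] with ω h
    exact lt_of_le_of_lt (runMin_le U ht le_rfl ω) h
  have haesm : ∀ t : ℕ, 1 ≤ t → AEStronglyMeasurable (M t) P := fun t ht => by
    rw [hMfun t]
    exact (mix_stronglyMeasurable (hVmeas t ht) t).aestronglyMeasurable
  -- key lintegral formula for M
  have hlintM : ∀ t : ℕ, 1 ≤ t → ∀ A : Set Ω,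
      ∫⁻ ω in A, ENNReal.ofReal (M t ω) ∂P
        = ∫⁻ θ in Set.Ioc (0:ℝ) 1,
            ENNReal.ofReal (((1 - θ) ^ t)⁻¹) * P (A ∩ {ω | θ ≤ runMin U t ω}) := by
    intro t ht A
    have h : ∀ ω, ENNReal.ofReal (M t ω)
        = ENNReal.ofReal (∫ θ in Set.Ioc (0:ℝ) (runMin U t ω), ((1 - θ) ^ t)⁻¹) := fun ω => by
      rw [hM t ω]
    simp only [h]
    exact mix_key_lintegral P (hVmeas t ht) (hVlt t ht) t A
  have hne1 : ∀ᵐ θ : ℝ ∂(volume : Measure ℝ), θ ≠ 1 := by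
    rw [ae_iff]
    have h : {θ : ℝ | ¬ θ ≠ 1} = {1} := by ext θ; simp
    rw [h]; exact measure_singleton 1
  -- total lintegral equals 1
  have hEtot : ∀ t : ℕ, 1 ≤ t → ∫⁻ ω, ENNReal.ofReal (M t ω) ∂P = 1 := by
    intro t ht
    have h0 := hlintM t ht Set.univ
    rw [setLIntegral_univ] at h0
    rw [h0]
    have hcong : ∫⁻ θ in Set.Ioc (0:ℝ) 1,
        ENNReal.ofReal (((1 - θ) ^ t)⁻¹) * P (Set.univ ∩ {ω | θ ≤ runMin U t ω})
        = ∫⁻ θ in Set.Ioc (0:ℝ) 1, 1 := by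
      apply lintegral_congr_ae
      filter_upwards [ae_restrict_mem measurableSet_Ioc, ae_restrict_of_ae hne1] with θ hθ hθ1
      have hθlt : θ < 1 := lt_of_le_of_ne hθ.2 hθ1
      have ha : (0:ℝ) < 1 - θ := by linarith
      rw [Set.univ_inter, mix_prob_V P U hmeas hindep hunif ht hθ.1.le,
        ← ENNReal.ofReal_pow ha.le, ← ENNReal.ofReal_mul
          (inv_nonneg.2 (pow_nonneg ha.le t)),
        inv_mul_cancel₀ (pow_ne_zero t ha.ne'), ENNReal.ofReal_one]
    rw [hcong, setLIntegral_one, Real.volume_Ioc]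
    norm_num
  have hInt : ∀ t : ℕ, 1 ≤ t → Integrable (M t) P := by
    intro t ht
    refine ⟨haesm t ht, ?_⟩
    rw [hasFiniteIntegral_iff_ofReal (Filter.Eventually.of_forall (hpos t))]
    rw [hEtot t ht]
    exact ENNReal.one_lt_top
  have hE : ∀ t : ℕ, 1 ≤ t → (∫ ω, M t ω ∂P) = 1 := by
    intro t ht
    rw [integral_eq_lintegral_of_nonneg_ae (Filter.Eventually.of_forall (hpos t)) (haesm t ht),
      hEtot t ht, ENNReal.toReal_one]
  refine ⟨hpos, hE 1 le_rfl, ?_⟩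
  intro t ht
  obtain ⟨n, hn, rfl⟩ : ∃ n, 1 ≤ n ∧ t = n + 1 := ⟨t - 1, by omega, by omega⟩
  simp only [Nat.add_sub_cancel]
  have hle : (⨆ j ∈ Set.Icc 1 n, MeasurableSpace.comap (U j) inferInstance)
      ≤ (inferInstance : MeasurableSpace Ω) :=
    iSup₂_le fun j _ => (hmeas j).comap_le
  refine (ae_eq_condExp_of_forall_setIntegral_eq hle (hInt (n+1) (by omega))
    (fun s _ _ => (hInt n hn).integrableOn) (fun s hs _ => ?_) ?_).symm
  · -- set integral equality
    have e1 : ∫ ω in s, M n ω ∂P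
        = (∫⁻ ω in s, ENNReal.ofReal (M n ω) ∂P).toReal := by
      rw [integral_eq_lintegral_of_nonneg_ae (Filter.Eventually.of_forall (hpos n))
        ((haesm n hn).restrict)]
    have e2 : ∫ ω in s, M (n+1) ω ∂P
        = (∫⁻ ω in s, ENNReal.ofReal (M (n+1) ω) ∂P).toReal := by
      rw [integral_eq_lintegral_of_nonneg_ae (Filter.Eventually.of_forall (hpos (n+1)))
        ((haesm (n+1) (by omega)).restrict)]
    rw [e1, e2]
    congr 1
    rw [hlintM n hn s, hlintM (n+1) (by omega) s]
    apply lintegral_congr_ae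
    filter_upwards [ae_restrict_mem measurableSet_Ioc, ae_restrict_of_ae hne1] with θ hθ hθ1
    have hθlt : θ < 1 := lt_of_le_of_ne hθ.2 hθ1
    have ha : (0:ℝ) < 1 - θ := by linarith
    have hkey : ENNReal.ofReal (((1 - θ) ^ (n+1))⁻¹) * ENNReal.ofReal (1 - θ)
        = ENNReal.ofReal (((1 - θ) ^ n)⁻¹) := by
      rw [← ENNReal.ofReal_mul (inv_nonneg.2 (pow_nonneg ha.le (n+1)))]
      congr 1
      rw [pow_succ, mul_inv, mul_assoc, inv_mul_cancel₀ ha.ne', mul_one]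
    rw [mix_factor_step P U hmeas hindep hunif hn hθ.1.le hs,
      mul_comm (P (s ∩ {ω | θ ≤ runMin U n ω})) (ENNReal.ofReal (1 - θ)), ← mul_assoc, hkey]
  · -- M n is measurable w.r.t. the filtration
    refine StronglyMeasurable.aestronglyMeasurable ?_
    rw [hMfun n]
    exact mix_stronglyMeasurable (mix_measV U hn) n
end

section
/- Let X_1, X_2, ... be i.i.d. random variables taking values in [0,1] with common law P_0, and let Y_t = min_{s ≤ t} X_s. Define g(u) = E[(u − X_1) · 1{X_1 < u}] for u ∈ [0,1]. Suppose μ̄ : [0,1] → [0,1] satisfies E[u − X_1 | X_1 < u] ≤ μ̄(u) for every u ∈ [0,1] with P_0(X_1 < u) > 0. Fix γ > 0 and δ ∈ (0,1), and let τ be the first t ∈ ℕ such that μ̄(Y_t) · p̄_t(δ) < γ. Then τ is finite (indeed τ is bounded by the smallest t for which p̄_t(δ) < γ, since μ̄ ≤ 1 and p̄_t(δ) → 0), and P(g(Y_τ) ≤ γ) ≥ 1 − δ. Equivalently, with probability at least 1 − δ, the expected improvement from one further sample, E[Y_τ − Y_{τ+1} | Y_τ, τ] = g(Y_τ), is at most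 γ. -/
open MeasureTheory ProbabilityTheory

/-- The anytime-valid bound `p̄_t(α)`: `p̄_1(α) = 1 - e^{-1/α}` and, for `t ≥ 2`,
`p̄_t(α) = 1 - ((t-1)/α + 1)^{-1/(t-1)}`. -/
noncomputable def pbar (t : ℕ) (α : ℝ) : ℝ :=
  if t = 1 then 1 - Real.exp (-1 / α)
  else 1 - ((t - 1 : ℝ) / α + 1) ^ (-1 / (t - 1 : ℝ))

open scoped ENNReal

lemma pbar_pos {δ : ℝ} (hδ : 0 < δ) {t : ℕ} (ht : 1 ≤ t) : 0 < pbar t δ := by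
  rcases eq_or_lt_of_le ht with h1 | h2
  · have h1' : t = 1 := h1.symm
    subst h1'
    rw [pbar, if_pos rfl, sub_pos]
    exact Real.exp_lt_one_iff.2 (div_neg_of_neg_of_pos (by norm_num) hδ)
  · have h2' : (2:ℝ) ≤ (t:ℝ) := by exact_mod_cast h2
    have hb : (1:ℝ) < ((t:ℝ) - 1) / δ + 1 := by
      have hpos : 0 < ((t:ℝ) - 1) / δ := by
        apply div_pos <;> linarith
      linarith
    have he : -1 / ((t:ℝ) - 1) < 0 :=
      div_neg_of_neg_of_pos (by norm_num) (by linarith)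
    simp only [pbar, if_neg (by omega : t ≠ 1), sub_pos]
    exact Real.rpow_lt_one_of_one_lt_of_neg hb he

lemma pbar_lt_one {δ : ℝ} (hδ : 0 < δ) {t : ℕ} (ht : 1 ≤ t) : pbar t δ < 1 := by
  rcases eq_or_lt_of_le ht with h1 | h2
  · have h1' : t = 1 := h1.symm
    subst h1'
    rw [pbar, if_pos rfl]
    have := Real.exp_pos (-1/δ)
    linarith
  · have h2' : (2:ℝ) ≤ (t:ℝ) := by exact_mod_cast h2
    have hb : (0:ℝ) < ((t:ℝ) - 1) / δ + 1 := by
      have hpos : 0 < ((t:ℝ) - 1) / δ := by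
        apply div_pos <;> linarith
      linarith
    simp only [pbar, if_neg (by omega : t ≠ 1)]
    have := Real.rpow_pos_of_pos hb (-1 / ((t:ℝ) - 1))
    linarith

lemma exists_pbar_lt {γ δ : ℝ} (hγ : 0 < γ) (hδ0 : 0 < δ) (hδ1 : δ < 1) :
    ∃ t : ℕ, 1 ≤ t ∧ pbar t δ < γ := by
  set n : ℕ := ⌈16 / (δ * γ ^ 2)⌉₊ + 2 with hn
  refine ⟨n, by omega, ?_⟩
  have hn2 : 2 ≤ n := by omega
  have htR : (2:ℝ) ≤ (n:ℝ) := by exact_mod_cast hn2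
  have ht1 : (1:ℝ) ≤ (n:ℝ) - 1 := by linarith
  have htgt : 16 / (δ * γ ^ 2) < (n:ℝ) := by
    have h1 : (16 / (δ * γ ^ 2) : ℝ) ≤ ⌈16 / (δ * γ ^ 2)⌉₊ := Nat.le_ceil _
    have h2 : ((⌈16 / (δ * γ ^ 2)⌉₊ : ℝ)) < (n:ℝ) := by
      rw [hn]; push_cast; linarith
    linarith
  have hkey : 16 < δ * γ ^ 2 * n := by
    have hpos : 0 < δ * γ ^ 2 := by positivity
    calc (16:ℝ) = 16 / (δ * γ ^ 2) * (δ * γ ^ 2) := by field_simp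
    _ < (n:ℝ) * (δ * γ ^ 2) := mul_lt_mul_of_pos_right htgt hpos
    _ = δ * γ ^ 2 * n := by ring
  set b : ℝ := ((n:ℝ) - 1) / δ + 1 with hb
  have hbpos : (1:ℝ) < b := by
    have : 0 < ((n:ℝ) - 1) / δ := by
      apply div_pos <;> linarith
    simp only [hb]; linarith
  have hb0 : (0:ℝ) < b := by linarith
  have hlog : Real.log b ≤ 2 * Real.sqrt b := by
    have h1 : Real.log (Real.sqrt b) ≤ Real.sqrt b - 1 :=
      Real.log_le_sub_one_of_pos (Real.sqrt_pos.2 hb0)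
    have h2 : Real.log (Real.sqrt b) = Real.log b / 2 := Real.log_sqrt hb0.le
    nlinarith [Real.sqrt_nonneg b]
  have hble : b ≤ (n:ℝ) / δ := by
    have h1 : (1:ℝ) ≤ 1 / δ := by
      rw [le_div_iff₀ hδ0]; linarith
    calc b ≤ ((n:ℝ) - 1) / δ + 1 / δ := by simp only [hb]; linarith
    _ = (n:ℝ) / δ := by ring
  have hpb : pbar n δ ≤ Real.log b / ((n:ℝ) - 1) := by
    have hne : n ≠ 1 := by omega
    simp only [pbar, if_neg hne, ← hb]
    rw [Real.rpow_def_of_pos hb0]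
    have harg : Real.log b * (-1 / ((n:ℝ) - 1)) = -(Real.log b / ((n:ℝ) - 1)) := by
      field_simp
    rw [harg]
    have := Real.add_one_le_exp (-(Real.log b / ((n:ℝ) - 1)))
    linarith
  have hfin : Real.log b / ((n:ℝ) - 1) < γ := by
    have hsb : Real.sqrt b ≤ Real.sqrt ((n:ℝ)/δ) := Real.sqrt_le_sqrt hble
    have h1 : Real.log b / ((n:ℝ) - 1) ≤ 2 * Real.sqrt ((n:ℝ)/δ) / ((n:ℝ) - 1) := by
      gcongr <;> linarith
    have h2 : 2 * Real.sqrt ((n:ℝ)/δ) / ((n:ℝ) - 1) ≤ 4 * Real.sqrt ((n:ℝ)/δ) / (n:ℝ) := by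
      rw [div_le_div_iff₀ (by linarith) (by linarith)]
      nlinarith [Real.sqrt_nonneg ((n:ℝ)/δ)]
    have h3 : 4 * Real.sqrt ((n:ℝ)/δ) / (n:ℝ) < γ := by
      rw [div_lt_iff₀ (by linarith : (0:ℝ) < (n:ℝ))]
      have hsq : (n:ℝ)/δ < (γ * (n:ℝ) / 4)^2 := by
        rw [div_lt_iff₀ hδ0]
        nlinarith [mul_lt_mul_of_pos_right hkey (by positivity : (0:ℝ) < (n:ℝ)/16)]
      have hlt : Real.sqrt ((n:ℝ)/δ) < γ * (n:ℝ) / 4 :=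
        (Real.sqrt_lt' (by positivity)).2 hsq
      linarith
    linarith
  linarith

lemma pbar_integral {δ : ℝ} (hδ0 : 0 < δ) {t : ℕ} (ht : 1 ≤ t) :
    ∫ x in (0:ℝ)..(pbar t δ), ((1-x)^t)⁻¹ = 1/δ := by
  have hq0 : 0 < pbar t δ := pbar_pos hδ0 ht
  have hq1 : pbar t δ < 1 := pbar_lt_one hδ0 ht
  set q : ℝ := pbar t δ with hqdef
  have huIcc : Set.uIcc (0:ℝ) q = Set.Icc 0 q := Set.uIcc_of_le hq0.le
  have hcont : ContinuousOn (fun x : ℝ => ((1-x)^t)⁻¹) (Set.Icc 0 q) := by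
    apply ContinuousOn.inv₀
    · exact (continuous_const.sub continuous_id).pow t |>.continuousOn
    · intro x hx
      have : 0 < 1 - x := by
        rcases hx with ⟨_, hx2⟩; linarith
      positivity
  have hint : IntervalIntegrable (fun x : ℝ => ((1-x)^t)⁻¹) MeasureTheory.volume 0 q := by
    apply ContinuousOn.intervalIntegrable
    rwa [huIcc]
  rcases eq_or_lt_of_le ht with h1 | h2
  · -- t = 1
    have h1' : t = 1 := h1.symm
    subst h1'
    have heval : ∫ x in (0:ℝ)..q, ((1-x)^1)⁻¹
        = -Real.log (1 - q) - -Real.log (1 - 0) := by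
      apply intervalIntegral.integral_eq_sub_of_hasDerivAt
        (f := fun y : ℝ => -Real.log (1 - y)) (f' := fun x : ℝ => ((1-x)^1)⁻¹)
      · intro x hx
        rw [huIcc] at hx
        have hpos : 0 < 1 - x := by
          rcases hx with ⟨_, hx2⟩; linarith
        have hd1 : HasDerivAt (fun y : ℝ => 1 - y) (-1) x := by
          simpa using (hasDerivAt_id x).const_sub 1
        have hd2 : HasDerivAt Real.log (1-x)⁻¹ (1-x) := Real.hasDerivAt_log hpos.ne'
        have := (hd2.comp x hd1).neg
        refine this.congr_deriv ?_
        simp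
      · exact hint
    rw [heval]
    have : 1 - q = Real.exp (-1/δ) := by
      rw [hqdef, pbar, if_pos rfl]; ring
    rw [this, Real.log_exp]
    norm_num
    ring
  · -- t ≥ 2
    obtain ⟨k, rfl⟩ : ∃ k : ℕ, t = k + 1 := ⟨t - 1, by omega⟩
    have hk1 : 1 ≤ k := by omega
    have hkR : (1:ℝ) ≤ (k:ℝ) := by exact_mod_cast hk1
    have hkne : (k:ℝ) ≠ 0 := by linarith
    set F : ℝ → ℝ := fun y => (1 - y) ^ (-(k:ℤ)) / k with hF
    have heval : ∫ x in (0:ℝ)..q, ((1-x)^(k+1))⁻¹ = F q - F 0 := by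
      apply intervalIntegral.integral_eq_sub_of_hasDerivAt
        (f := F) (f' := fun x : ℝ => ((1-x)^(k+1))⁻¹)
      · intro x hx
        rw [huIcc] at hx
        have hpos : 0 < 1 - x := by
          rcases hx with ⟨_, hx2⟩; linarith
        have hd1 : HasDerivAt (fun y : ℝ => 1 - y) (-1) x := by
          simpa using (hasDerivAt_id x).const_sub 1
        have hd2 := hasDerivAt_zpow (-(k:ℤ)) (1-x) (Or.inl hpos.ne')
        have hcomp := (hd2.comp x hd1).div_const (k:ℝ)
        refine hcomp.congr_deriv ?_
        have hz : (1-x) ^ (-(k:ℤ) - 1) = ((1-x)^(k+1))⁻¹ := by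
          rw [show (-(k:ℤ) - 1) = -((k+1:ℕ):ℤ) by push_cast; ring, zpow_neg, zpow_natCast]
        rw [hz]
        push_cast
        field_simp
      · exact hint
    rw [heval]
    have hco : ((k:ℝ) + 1 - 1) = (k:ℝ) := by ring
    have h1q : 1 - q = (((k:ℝ))/δ + 1) ^ (-1/(k:ℝ) : ℝ) := by
      simp only [hqdef, pbar, if_neg (by omega : k + 1 ≠ 1)]
      push_cast
      rw [hco]
      ring
    have hbase : (0:ℝ) < (k:ℝ)/δ + 1 := by positivity
    have hzpow : (1 - q) ^ (-(k:ℤ)) = (k:ℝ)/δ + 1 := by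
      rw [h1q, ← Real.rpow_intCast ((((k:ℝ))/δ + 1) ^ (-1/(k:ℝ) : ℝ)) (-(k:ℤ)),
        ← Real.rpow_mul hbase.le]
      have : (-1/(k:ℝ)) * ((-(k:ℤ) : ℤ) : ℝ) = 1 := by
        push_cast
        field_simp
      rw [this, Real.rpow_one]
    simp only [hF]
    rw [hzpow]
    have h0 : ((1:ℝ) - 0) ^ (-(k:ℤ)) = 1 := by norm_num
    rw [h0]
    field_simp
    ring

/-- I.i.d. samples `X_1, X_2, ...` in `[0,1]` with running minimum `Y_t`,
marginal gain `g(u) = E[(u - X_1)·1{X_1 < u}]`, and a CEI bound `μ̄ : [0,1] → [0,1]` with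
`E[u - X_1 | X_1 < u] ≤ μ̄(u)` whenever `P(X_1 < u) > 0`.  For `γ > 0`, `δ ∈ (0,1)`, let
`τ` be the first `t ≥ 1` with `μ̄(Y_t)·p̄_t(δ) < γ`.  Then `τ` is finite — bounded by the
smallest `t ≥ 1` with `p̄_t(δ) < γ`, which exists — and `P(g(Y_τ) ≤ γ) ≥ 1 - δ`. -/
theorem adaptive_stopping_infinite_data {Ω : Type*} [MeasurableSpace Ω] (P : Measure Ω)
    [IsProbabilityMeasure P] (X : ℕ → Ω → ℝ) (hmeas : ∀ i, Measurable (X i))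
    (hindep : iIndepFun X P)
    (hid : ∀ i, Measure.map (X i) P = Measure.map (X 1) P)
    (hbdd : ∀ i ω, X i ω ∈ Set.Icc (0 : ℝ) 1)
    (g : ℝ → ℝ) (hg : ∀ u, g u = ∫ ω, (if X 1 ω < u then u - X 1 ω else 0) ∂P)
    (mubar : ℝ → ℝ) (hmubar_mem : ∀ u ∈ Set.Icc (0 : ℝ) 1, mubar u ∈ Set.Icc (0 : ℝ) 1)
    (hmubar : ∀ u ∈ Set.Icc (0 : ℝ) 1, P {ω | X 1 ω < u} ≠ 0 →
      (∫ ω, (if X 1 ω < u then u - X 1 ω else 0) ∂P) / (P {ω | X 1 ω < u}).toReal ≤ mubar u)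
    (γ δ : ℝ) (hγ : 0 < γ) (hδ : δ ∈ Set.Ioo (0 : ℝ) 1)
    (τ : Ω → ℕ)
    (hτ : ∀ ω, τ ω = sInf {t : ℕ | 1 ≤ t ∧ mubar (runMin X t ω) * pbar t δ < γ}) :
    (∃ t : ℕ, 1 ≤ t ∧ pbar t δ < γ) ∧
    (∀ ω, τ ω ≤ sInf {t : ℕ | 1 ≤ t ∧ pbar t δ < γ}) ∧
    ENNReal.ofReal (1 - δ) ≤ P {ω | g (runMin X (τ ω) ω) ≤ γ} := by
  obtain ⟨hδ0, hδ1⟩ := hδ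
  -- running minimum facts
  have hrfin : ∀ (t : ℕ) (ω : Ω), ((fun s => X s ω) '' Set.Icc 1 t).Finite :=
    fun t ω => (Set.finite_Icc 1 t).image _
  have hrun_mem : ∀ (t : ℕ) (ω : Ω), 1 ≤ t → runMin X t ω ∈ Set.Icc (0:ℝ) 1 := by
    intro t ω ht
    have hne : ((fun s => X s ω) '' Set.Icc 1 t).Nonempty := ⟨X 1 ω, 1, ⟨le_rfl, ht⟩, rfl⟩
    obtain ⟨s, _, heq⟩ := hne.csInf_mem (hrfin t ω)
    rw [runMin, ← heq]
    exact hbdd s ω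
  have hrun_le : ∀ (t : ℕ) (ω : Ω) (s : ℕ), s ∈ Set.Icc 1 t → runMin X t ω ≤ X s ω :=
    fun t ω s hs => csInf_le (hrfin t ω).bddBelow ⟨s, hs, rfl⟩
  -- Part A
  obtain ⟨t₀, ht₀1, ht₀γ⟩ := exists_pbar_lt hγ hδ0 hδ1
  have hmemS : ∀ ω : Ω, t₀ ∈ {t : ℕ | 1 ≤ t ∧ mubar (runMin X t ω) * pbar t δ < γ} := by
    intro ω
    refine ⟨ht₀1, lt_of_le_of_lt ?_ ht₀γ⟩
    exact mul_le_of_le_one_left (pbar_pos hδ0 ht₀1).le (hmubar_mem _ (hrun_mem t₀ ω ht₀1)).2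
  refine ⟨⟨t₀, ht₀1, ht₀γ⟩, ?_, ?_⟩
  · intro ω
    rw [hτ ω]
    have h0 := Nat.sInf_mem (⟨t₀, ht₀1, ht₀γ⟩ : {t : ℕ | 1 ≤ t ∧ pbar t δ < γ}.Nonempty)
    refine Nat.sInf_le ⟨h0.1, lt_of_le_of_lt ?_ h0.2⟩
    exact mul_le_of_le_one_left (pbar_pos hδ0 h0.1).le (hmubar_mem _ (hrun_mem _ ω h0.1)).2
  -- Part C
  set Fm : ℝ → ℝ≥0∞ := fun u => P {ω | X 1 ω < u} with hFmdef
  have hFm_mono : ∀ a b : ℝ, a ≤ b → Fm a ≤ Fm b :=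
    fun a b hab => measure_mono (fun ω (h : X 1 ω < a) => lt_of_lt_of_le h hab)
  set v : ℝ → ℝ := fun x => sSup {u : ℝ | Fm u ≤ ENNReal.ofReal x} with hvdef
  have hS0 : ∀ x : ℝ, (0:ℝ) ∈ {u : ℝ | Fm u ≤ ENNReal.ofReal x} := by
    intro x
    have hempty : {ω | X 1 ω < 0} = (∅ : Set Ω) := by
      ext ω
      simp only [Set.mem_setOf_eq, Set.mem_empty_iff_false, iff_false, not_lt]
      exact (hbdd 1 ω).1
    show Fm 0 ≤ _
    simp only [hFmdef, hempty, measure_empty]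
    exact zero_le
  have hSbdd : ∀ x : ℝ, x < 1 → BddAbove {u : ℝ | Fm u ≤ ENNReal.ofReal x} := by
    intro x hx
    refine ⟨2, fun u hu => ?_⟩
    by_contra hc
    push_neg at hc
    have huniv : {ω | X 1 ω < u} = (Set.univ : Set Ω) := by
      ext ω
      simp only [Set.mem_setOf_eq, Set.mem_univ, iff_true]
      have := (hbdd 1 ω).2
      linarith
    have h1 : Fm u = 1 := by simp only [hFmdef, huniv, measure_univ]
    have h2 : Fm u ≤ ENNReal.ofReal x := hu
    rw [h1] at h2
    exact absurd (lt_of_le_of_lt h2 (ENNReal.ofReal_lt_one.2 hx)) (lt_irrefl _)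
  have hv_mono : ∀ x y : ℝ, x ≤ y → y < 1 → v x ≤ v y := by
    intro x y hxy hy
    exact csSup_le_csSup (hSbdd y hy) ⟨0, hS0 x⟩
      (fun u hu => le_trans hu (ENNReal.ofReal_le_ofReal hxy))
  have hv_lt : ∀ x : ℝ, ∀ u : ℝ, u < v x → Fm u ≤ ENNReal.ofReal x := by
    intro x u hu
    obtain ⟨a, ha, hua⟩ := exists_lt_of_lt_csSup ⟨0, hS0 x⟩ hu
    exact le_trans (hFm_mono u a hua.le) ha
  have hv_le : ∀ x : ℝ, ∀ y : ℝ, y ≤ v x → Fm y ≤ ENNReal.ofReal x := by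
    intro x y hy
    rcases lt_or_eq_of_le hy with h | h
    · exact hv_lt x y h
    · have hun : {ω | X 1 ω < y} = ⋃ n : ℕ, {ω | X 1 ω < y - 1/(n+1)} := by
        ext ω
        simp only [Set.mem_setOf_eq, Set.mem_iUnion]
        constructor
        · intro hlt
          obtain ⟨n, hn⟩ := exists_nat_one_div_lt (sub_pos.2 hlt)
          exact ⟨n, by push_cast at hn ⊢; linarith⟩
        · rintro ⟨n, hn⟩
          have hpos : (0:ℝ) < 1/((n:ℝ)+1) := by positivity
          push_cast at hn
          linarith
      have hmono : Monotone (fun n : ℕ => {ω | X 1 ω < y - 1/((n:ℕ)+1)}) := by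
        intro n m hnm ω hω
        simp only [Set.mem_setOf_eq] at hω ⊢
        have h1 : 1/((m:ℝ)+1) ≤ 1/((n:ℝ)+1) := by
          apply one_div_le_one_div_of_le
          · positivity
          · push_cast; exact_mod_cast by omega
        push_cast at hω ⊢
        linarith
      show Fm y ≤ _
      calc Fm y = P (⋃ n : ℕ, {ω | X 1 ω < y - 1/(n+1)}) := by
            simp only [hFmdef]
            rw [hun]
        _ = ⨆ n : ℕ, P {ω | X 1 ω < y - 1/(n+1)} := Monotone.measure_iUnion hmono
        _ ≤ ENNReal.ofReal x := by
            apply iSup_le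
            intro n
            apply hv_lt x
            rw [← h]
            have hpos : (0:ℝ) < 1/((n:ℝ)+1) := by positivity
            push_cast
            linarith
  have hv_tail : ∀ x : ℝ, 0 ≤ x → x < 1 → P {ω | v x < X 1 ω} ≤ ENNReal.ofReal (1 - x) := by
    intro x hx0 hx1
    have hle : ENNReal.ofReal x ≤ P {ω | X 1 ω ≤ v x} := by
      have hiec : {ω | X 1 ω ≤ v x} = ⋂ n : ℕ, {ω | X 1 ω < v x + 1/(n+1)} := by
        ext ω
        simp only [Set.mem_setOf_eq, Set.mem_iInter]
        constructor
        · intro hle n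
          have hpos : (0:ℝ) < 1/((n:ℝ)+1) := by positivity
          push_cast
          linarith
        · intro hall
          by_contra hc
          push_neg at hc
          obtain ⟨n, hn⟩ := exists_nat_one_div_lt (sub_pos.2 hc)
          have := hall n
          push_cast at hn this
          linarith
      have hanti : Antitone (fun n : ℕ => {ω | X 1 ω < v x + 1/((n:ℕ)+1)}) := by
        intro n m hnm ω hω
        simp only [Set.mem_setOf_eq] at hω ⊢
        have h1 : 1/((m:ℝ)+1) ≤ 1/((n:ℝ)+1) := by
          apply one_div_le_one_div_of_le
          · positivity
          · push_cast; exact_mod_cast by omega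
        push_cast at hω ⊢
        linarith
      rw [hiec, Antitone.measure_iInter hanti
        (fun n => ((hmeas 1) measurableSet_Iio).nullMeasurableSet)
        ⟨0, measure_ne_top P _⟩]
      apply le_iInf
      intro n
      have hnotmem : (v x + 1/((n:ℕ)+1) : ℝ) ∉ {u : ℝ | Fm u ≤ ENNReal.ofReal x} := by
        intro hmem
        have h1 : v x + 1/((n:ℕ)+1) ≤ v x := le_csSup (hSbdd x hx1) hmem
        have hpos : (0:ℝ) < 1/((n:ℝ)+1) := by positivity
        push_cast at h1
        linarith
      have h2 : ENNReal.ofReal x < Fm (v x + 1/((n:ℕ)+1)) := by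
        by_contra hc
        push_neg at hc
        exact hnotmem hc
      exact h2.le
    have hcompl : {ω | v x < X 1 ω} = {ω | X 1 ω ≤ v x}ᶜ := by
      ext ω
      simp only [Set.mem_setOf_eq, Set.mem_compl_iff, not_le]
    rw [hcompl, measure_compl (measurableSet_le (hmeas 1) measurable_const) (measure_ne_top P _), measure_univ]
    calc 1 - P {ω | X 1 ω ≤ v x} ≤ 1 - ENNReal.ofReal x := tsub_le_tsub_left hle 1
      _ = ENNReal.ofReal (1 - x) := by
          rw [← ENNReal.ofReal_one, ← ENNReal.ofReal_sub _ hx0]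
  -- events
  set B : ℕ → Set Ω := fun t => ⋂ s ∈ Set.Icc 1 t, {ω | v (pbar t δ) < X s ω} with hBdef
  set G : ℕ → Set Ω := fun t => ⋂ s ∈ Set.Icc 1 t, (B s)ᶜ with hGdef
  set E : ℕ → Set Ω := fun t => G (t-1) ∩ B t with hEdef
  have hmeasXgt : ∀ (i : ℕ) (c : ℝ), MeasurableSet {ω | c < X i ω} :=
    fun i c => measurableSet_lt measurable_const (hmeas i)
  have hmeasB : ∀ t, MeasurableSet (B t) := fun t =>
    MeasurableSet.biInter (Set.to_countable _) (fun s _ => hmeasXgt s _)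
  have hmeasG : ∀ t, MeasurableSet (G t) := fun t =>
    MeasurableSet.biInter (Set.to_countable _) (fun s _ => (hmeasB s).compl)
  have hmeasE : ∀ t, MeasurableSet (E t) := fun t => (hmeasG _).inter (hmeasB t)
  have hBgood : ∀ (t : ℕ) (ω : Ω), 1 ≤ t → ω ∉ B t →
      Fm (runMin X t ω) ≤ ENNReal.ofReal (pbar t δ) := by
    intro t ω ht hω
    have hex : ∃ s ∈ Set.Icc 1 t, X s ω ≤ v (pbar t δ) := by
      by_contra hc
      push_neg at hc
      exact hω (Set.mem_biInter fun s hs => hc s hs)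
    obtain ⟨s, hs, hXs⟩ := hex
    exact hv_le _ _ (le_trans (hrun_le t ω s hs) hXs)
  -- generic splitting of biInter over Icc 1 (T+1)
  have hIccsucc : ∀ (f : ℕ → Set Ω) (T : ℕ),
      (⋂ s ∈ Set.Icc 1 (T+1), f s) = (⋂ s ∈ Set.Icc 1 T, f s) ∩ f (T+1) := by
    intro f T
    ext ω
    simp only [Set.mem_iInter, Set.mem_inter_iff, Set.mem_Icc]
    constructor
    · intro h
      exact ⟨fun s hs => h s ⟨hs.1, by omega⟩, h (T+1) ⟨by omega, le_rfl⟩⟩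
    · rintro ⟨h1, h2⟩ s hs
      rcases Nat.lt_or_ge s (T+1) with hl | hg
      · exact h1 s ⟨hs.1, by omega⟩
      · have hse : s = T+1 := by omega
        rw [hse]
        exact h2
  -- the key supermartingale induction, for fixed x ∈ (0,1)
  have hkey : ∀ x : ℝ, x ∈ Set.Ioo (0:ℝ) 1 → ∀ T : ℕ,
      ∑ s ∈ Finset.Icc 1 T,
        P (E s ∩ ⋂ i ∈ Set.Icc 1 s, {ω | v x < X i ω}) / (ENNReal.ofReal (1-x))^s ≤ 1 := by
    intro x hx T
    set H : ℕ → Set Ω := fun t => ⋂ i ∈ Set.Icc 1 t, {ω | v x < X i ω} with hHdef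
    set r : ℝ≥0∞ := ENNReal.ofReal (1-x) with hrdef
    have hr0 : r ≠ 0 := by
      simp only [hrdef, ne_eq, ENNReal.ofReal_eq_zero, not_le]
      linarith [hx.2]
    have hrtop : r ≠ ⊤ := ENNReal.ofReal_ne_top
    have main : ∀ T : ℕ,
        (∑ s ∈ Finset.Icc 1 T, P (E s ∩ H s) / r^s) + P (G T ∩ H T)/r^T ≤ 1 := by
      intro T
      induction T with
      | zero =>
        have hG0 : G 0 = Set.univ := by
          simp only [hGdef]
          rw [show Set.Icc 1 0 = (∅ : Set ℕ) from Set.Icc_eq_empty (by omega)]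
          simp
        have hH0 : H 0 = Set.univ := by
          simp only [hHdef]
          rw [show Set.Icc 1 0 = (∅ : Set ℕ) from Set.Icc_eq_empty (by omega)]
          simp
        rw [show Finset.Icc 1 0 = (∅ : Finset ℕ) from Finset.Icc_eq_empty (by omega)]
        simp [hG0, hH0]
      | succ T ih =>
        have hGsucc : G (T+1) = G T ∩ (B (T+1))ᶜ := by rw [hGdef]; exact hIccsucc _ T
        have hHsucc : H (T+1) = H T ∩ {ω | v x < X (T+1) ω} := by rw [hHdef]; exact hIccsucc _ T
        have hEsucc : E (T+1) = G T ∩ B (T+1) := by rw [hEdef]; simp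
        set D : Set Ω := (G T ∩ H T) ∩ {ω | v x < X (T+1) ω} with hDdef
        have hsplit : P (E (T+1) ∩ H (T+1)) + P (G (T+1) ∩ H (T+1)) = P D := by
          have h1 : E (T+1) ∩ H (T+1) = D ∩ B (T+1) := by
            rw [hEsucc, hHsucc, hDdef]
            ext ω
            simp only [Set.mem_inter_iff]
            tauto
          have h2 : G (T+1) ∩ H (T+1) = D \ B (T+1) := by
            rw [hGsucc, hHsucc, hDdef, Set.diff_eq]
            ext ω
            simp only [Set.mem_inter_iff, Set.mem_compl_iff]
            tauto
          rw [h1, h2]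
          exact measure_inter_add_diff D (hmeasB (T+1))
        have hindepT := indep_biSup_compl (fun n => (hmeas n).comap_le) hindep (Set.Iic T)
        have hMgt : ∀ (i : ℕ), i ≤ T → ∀ c : ℝ,
            MeasurableSet[⨆ n ∈ Set.Iic T, MeasurableSpace.comap (X n) inferInstance]
              {ω | c < X i ω} := by
          intro i hi c
          have hle : MeasurableSpace.comap (X i) inferInstance ≤
              ⨆ n ∈ Set.Iic T, MeasurableSpace.comap (X n) inferInstance :=
            le_biSup (fun n => MeasurableSpace.comap (X n) inferInstance) (Set.mem_Iic.2 hi)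
          exact hle _ ⟨Set.Ioi c, measurableSet_Ioi, rfl⟩
        have hA : MeasurableSet[⨆ n ∈ Set.Iic T, MeasurableSpace.comap (X n) inferInstance]
            (G T ∩ H T) := by
          apply MeasurableSet.inter
          · rw [hGdef]
            apply MeasurableSet.biInter (Set.to_countable _)
            intro s hs
            apply MeasurableSet.compl
            rw [hBdef]
            apply MeasurableSet.biInter (Set.to_countable _)
            intro i hi
            exact hMgt i (le_trans hi.2 hs.2) _
          · rw [hHdef]
            apply MeasurableSet.biInter (Set.to_countable _)
            intro i hi
            exact hMgt i hi.2 _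
        have hC : MeasurableSet[⨆ n ∈ (Set.Iic T)ᶜ, MeasurableSpace.comap (X n) inferInstance]
            {ω | v x < X (T+1) ω} := by
          have hmem : (T+1) ∈ (Set.Iic T)ᶜ := by simp
          have hle : MeasurableSpace.comap (X (T+1)) inferInstance ≤
              ⨆ n ∈ (Set.Iic T)ᶜ, MeasurableSpace.comap (X n) inferInstance :=
            le_biSup (fun n => MeasurableSpace.comap (X n) inferInstance) hmem
          exact hle _ ⟨Set.Ioi (v x), measurableSet_Ioi, rfl⟩
        have hprod : P D = P (G T ∩ H T) * P {ω | v x < X (T+1) ω} := by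
          rw [hDdef]
          exact (Indep_iff _ _ P).1 hindepT _ _ hA hC
        have hid' : P {ω | v x < X (T+1) ω} = P {ω | v x < X 1 ω} := by
          have h1 : {ω | v x < X (T+1) ω} = X (T+1) ⁻¹' Set.Ioi (v x) := rfl
          have h2 : {ω | v x < X 1 ω} = X 1 ⁻¹' Set.Ioi (v x) := rfl
          rw [h1, h2, ← Measure.map_apply (hmeas (T+1)) measurableSet_Ioi,
            ← Measure.map_apply (hmeas 1) measurableSet_Ioi, hid (T+1)]
        have hDle : P D ≤ P (G T ∩ H T) * r := by
          rw [hprod, hid', hrdef]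
          exact mul_le_mul_right (hv_tail x hx.1.le hx.2) _
        have harith : P (E (T+1) ∩ H (T+1))/r^(T+1) + P (G (T+1) ∩ H (T+1))/r^(T+1)
            ≤ P (G T ∩ H T)/r^T := by
          rw [ENNReal.div_add_div_same, hsplit]
          calc P D / r^(T+1) ≤ (P (G T ∩ H T) * r) / r^(T+1) :=
                ENNReal.div_le_div_right hDle _
            _ = P (G T ∩ H T) / r^T := by
                rw [pow_succ, ENNReal.mul_div_mul_right _ _ hr0 hrtop]
        rw [Finset.sum_Icc_succ_top (by omega : 1 ≤ T+1)]
        calc (∑ s ∈ Finset.Icc 1 T, P (E s ∩ H s)/r^s) + P (E (T+1) ∩ H (T+1))/r^(T+1)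
              + P (G (T+1) ∩ H (T+1))/r^(T+1)
            = (∑ s ∈ Finset.Icc 1 T, P (E s ∩ H s)/r^s) +
              (P (E (T+1) ∩ H (T+1))/r^(T+1) + P (G (T+1) ∩ H (T+1))/r^(T+1)) := by ring
          _ ≤ (∑ s ∈ Finset.Icc 1 T, P (E s ∩ H s)/r^s) + P (G T ∩ H T)/r^T :=
              add_le_add_right harith _
          _ ≤ 1 := ih
    exact le_trans le_self_add (main T)
  -- integrate over x ∈ (0,1)
  have hEbound : ∀ T : ℕ, ENNReal.ofReal (1/δ) * ∑ s ∈ Finset.Icc 1 T, P (E s) ≤ 1 := by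
    intro T
    set h : ℕ → ℝ → ℝ≥0∞ := fun s xx =>
      (Set.Ioo (0:ℝ) (pbar s δ)).indicator
        (fun xx => ENNReal.ofReal (((1-xx)^s)⁻¹) * P (E s)) xx with hhdef
    have hhmeas : ∀ s, Measurable (h s) := by
      intro s
      apply Measurable.indicator ?_ measurableSet_Ioo
      apply Measurable.mul_const
      exact (((measurable_const.sub measurable_id).pow_const s).inv).ennreal_ofReal
    have hsub1 : ∀ s : ℕ, 1 ≤ s → Set.Ioo (0:ℝ) (pbar s δ) ⊆ Set.Ioo (0:ℝ) 1 :=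
      fun s hs => Set.Ioo_subset_Ioo le_rfl (pbar_lt_one hδ0 hs).le
    have hpt : ∀ xx : ℝ, ∑ s ∈ Finset.Icc 1 T, h s xx ≤ 1 := by
      intro xx
      by_cases hxx : xx ∈ Set.Ioo (0:ℝ) 1
      · refine le_trans (Finset.sum_le_sum ?_) (hkey xx hxx T)
        intro s hs
        rw [Finset.mem_Icc] at hs
        by_cases hmem : xx ∈ Set.Ioo (0:ℝ) (pbar s δ)
        · rw [hhdef]
          simp only [Set.indicator_of_mem hmem]
          have hsub : E s ⊆ ⋂ i ∈ Set.Icc 1 s, {ω | v xx < X i ω} := by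
            intro ω hω
            have hωB : ω ∈ B s := hω.2
            apply Set.mem_biInter
            intro i hi
            have h1 : v xx ≤ v (pbar s δ) := hv_mono xx _ hmem.2.le (pbar_lt_one hδ0 hs.1)
            have h2 : v (pbar s δ) < X i ω := by
              have := Set.mem_iInter₂.1 hωB i hi
              exact this
            exact lt_of_le_of_lt h1 h2
          have heq : E s ∩ (⋂ i ∈ Set.Icc 1 s, {ω | v xx < X i ω}) = E s :=
            Set.inter_eq_left.2 hsub
          rw [heq]
          have hxpos : (0:ℝ) < 1 - xx := by linarith [hxx.2]
          have hr : (ENNReal.ofReal (1-xx))^s = ENNReal.ofReal ((1-xx)^s) :=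
            (ENNReal.ofReal_pow hxpos.le s).symm
          rw [ENNReal.ofReal_inv_of_pos (pow_pos hxpos s)]
          rw [div_eq_mul_inv, mul_comm (P (E s)), hr]
        · rw [hhdef]
          simp only [Set.indicator_of_notMem hmem]
          exact zero_le
      · have hzero : ∀ s ∈ Finset.Icc 1 T, h s xx = 0 := by
          intro s hs
          rw [Finset.mem_Icc] at hs
          rw [hhdef]
          exact Set.indicator_of_notMem (fun hmem => hxx (hsub1 s hs.1 hmem)) _
        rw [Finset.sum_congr rfl hzero]
        simp
    have hsupp : ∀ s : ℕ, ∫⁻ xx, h s xx =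
        ∫⁻ xx in Set.Ioo (0:ℝ) (pbar s δ), ENNReal.ofReal (((1-xx)^s)⁻¹) * P (E s) := by
      intro s
      rw [hhdef]
      exact lintegral_indicator measurableSet_Ioo _
    have hlow : ∀ s : ℕ, 1 ≤ s → ENNReal.ofReal (1/δ) * P (E s) ≤ ∫⁻ xx, h s xx := by
      intro s hs
      rw [hsupp s]
      have hfm : Measurable (fun xx : ℝ => ENNReal.ofReal (((1-xx)^s)⁻¹)) :=
        (((measurable_const.sub measurable_id).pow_const s).inv).ennreal_ofReal
      rw [lintegral_mul_const _ hfm]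
      apply mul_le_mul_left
      have hq0 := pbar_pos hδ0 hs
      have hq1 := pbar_lt_one hδ0 hs
      have hie : IntegrableOn (fun xx : ℝ => ((1-xx)^s)⁻¹) (Set.Ioo 0 (pbar s δ)) := by
        apply (ContinuousOn.integrableOn_Icc ?_).mono_set Set.Ioo_subset_Icc_self
        apply ContinuousOn.inv₀
        · exact (((continuous_const.sub continuous_id).pow s)).continuousOn
        · intro xx hxx
          have hxpos : 0 < 1 - xx := by
            rcases hxx with ⟨_, h2⟩
            linarith
          positivity
      have hnn : 0 ≤ᵐ[volume.restrict (Set.Ioo (0:ℝ) (pbar s δ))]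
          (fun xx : ℝ => ((1-xx)^s)⁻¹) := by
        rw [Filter.EventuallyLE]
        rw [ae_restrict_iff' measurableSet_Ioo]
        apply Filter.Eventually.of_forall
        intro xx hxx
        have hxpos : 0 < 1 - xx := by
          rcases hxx with ⟨_, h2⟩
          linarith
        positivity
      have heq := ofReal_integral_eq_lintegral_ofReal hie hnn
      rw [← heq]
      apply ENNReal.ofReal_le_ofReal
      have hIoo : ∫ xx in Set.Ioo (0:ℝ) (pbar s δ), ((1-xx)^s)⁻¹
          = ∫ xx in (0:ℝ)..(pbar s δ), ((1-xx)^s)⁻¹ := by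
        rw [intervalIntegral.integral_of_le hq0.le, MeasureTheory.integral_Ioc_eq_integral_Ioo]
      rw [hIoo, pbar_integral hδ0 hs]
    have hindic : ∀ xx : ℝ, ∑ s ∈ Finset.Icc 1 T, h s xx
        = (Set.Ioo (0:ℝ) 1).indicator (fun xx => ∑ s ∈ Finset.Icc 1 T, h s xx) xx := by
      intro xx
      by_cases hxx : xx ∈ Set.Ioo (0:ℝ) 1
      · rw [Set.indicator_of_mem hxx]
      · rw [Set.indicator_of_notMem hxx]
        apply Finset.sum_eq_zero
        intro s hs
        rw [Finset.mem_Icc] at hs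
        rw [hhdef]
        exact Set.indicator_of_notMem (fun hmem => hxx (hsub1 s hs.1 hmem)) _
    calc ENNReal.ofReal (1/δ) * ∑ s ∈ Finset.Icc 1 T, P (E s)
        = ∑ s ∈ Finset.Icc 1 T, ENNReal.ofReal (1/δ) * P (E s) := Finset.mul_sum _ _ _
      _ ≤ ∑ s ∈ Finset.Icc 1 T, ∫⁻ xx, h s xx :=
          Finset.sum_le_sum (fun s hs => hlow s (Finset.mem_Icc.1 hs).1)
      _ = ∫⁻ xx, ∑ s ∈ Finset.Icc 1 T, h s xx :=
          (lintegral_finset_sum _ (fun s _ => hhmeas s)).symm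
      _ = ∫⁻ xx in Set.Ioo (0:ℝ) 1, ∑ s ∈ Finset.Icc 1 T, h s xx := by
          rw [lintegral_congr hindic]
          exact lintegral_indicator measurableSet_Ioo _
      _ ≤ ∫⁻ _ in Set.Ioo (0:ℝ) 1, 1 := lintegral_mono hpt
      _ = 1 := by
          rw [setLIntegral_one, Real.volume_Ioo]
          norm_num
  -- union bound
  have hUsub : ∀ T : ℕ, (⋃ t ∈ Set.Icc 1 T, B t) ⊆ ⋃ s ∈ Finset.Icc 1 T, E s := by
    intro T ω hω
    rw [Set.mem_iUnion₂] at hω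
    obtain ⟨t, ht, hB⟩ := hω
    rw [Set.mem_Icc] at ht
    have hne : {u : ℕ | 1 ≤ u ∧ ω ∈ B u}.Nonempty := ⟨t, ht.1, hB⟩
    have hmmem := Nat.sInf_mem hne
    have hmle : sInf {u : ℕ | 1 ≤ u ∧ ω ∈ B u} ≤ t := Nat.sInf_le ⟨ht.1, hB⟩
    rw [Set.mem_iUnion₂]
    refine ⟨sInf {u : ℕ | 1 ≤ u ∧ ω ∈ B u},
      Finset.mem_Icc.2 ⟨hmmem.1, le_trans hmle ht.2⟩, ?_, hmmem.2⟩
    rw [hGdef]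
    apply Set.mem_biInter
    intro i hi
    rw [Set.mem_Icc] at hi
    simp only [Set.mem_compl_iff]
    intro hBi
    have hge : sInf {u : ℕ | 1 ≤ u ∧ ω ∈ B u} ≤ i := Nat.sInf_le ⟨hi.1, hBi⟩
    have hm1 := hmmem.1
    omega
  have hPU : ∀ T : ℕ, P (⋃ t ∈ Set.Icc 1 T, B t) ≤ ENNReal.ofReal δ := by
    intro T
    have h1 : P (⋃ t ∈ Set.Icc 1 T, B t) ≤ ∑ s ∈ Finset.Icc 1 T, P (E s) :=
      le_trans (measure_mono (hUsub T)) (measure_biUnion_finset_le _ _)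
    have h3 : ENNReal.ofReal δ * ENNReal.ofReal (1/δ) = 1 := by
      rw [← ENNReal.ofReal_mul hδ0.le, mul_one_div_cancel hδ0.ne', ENNReal.ofReal_one]
    calc P (⋃ t ∈ Set.Icc 1 T, B t)
        = ENNReal.ofReal δ * ENNReal.ofReal (1/δ) * P (⋃ t ∈ Set.Icc 1 T, B t) := by
          rw [h3, one_mul]
      _ = ENNReal.ofReal δ * (ENNReal.ofReal (1/δ) * P (⋃ t ∈ Set.Icc 1 T, B t)) := by ring
      _ ≤ ENNReal.ofReal δ * (ENNReal.ofReal (1/δ) * ∑ s ∈ Finset.Icc 1 T, P (E s)) :=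
          mul_le_mul_right (mul_le_mul_right h1 _) _
      _ ≤ ENNReal.ofReal δ * 1 := mul_le_mul_right (hEbound T) _
      _ = ENNReal.ofReal δ := mul_one _
  set U : Set Ω := ⋃ t : ℕ, ⋃ (_ : 1 ≤ t), B t with hUdef
  have hUmeas : MeasurableSet U :=
    MeasurableSet.iUnion (fun t => MeasurableSet.iUnion (fun _ => hmeasB t))
  have hUT : U = ⋃ T : ℕ, ⋃ t ∈ Set.Icc 1 T, B t := by
    ext ω
    rw [hUdef]
    simp only [Set.mem_iUnion, Set.mem_Icc]
    constructor
    · rintro ⟨t, ht, hB⟩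
      exact ⟨t, t, ⟨ht, le_rfl⟩, hB⟩
    · rintro ⟨T, t, ⟨h1, _⟩, hB⟩
      exact ⟨t, h1, hB⟩
  have hPUlim : P U ≤ ENNReal.ofReal δ := by
    rw [hUT]
    have hmono : Monotone (fun T : ℕ => ⋃ t ∈ Set.Icc 1 T, B t) := by
      intro a b hab
      apply Set.iUnion₂_subset
      intro t ht
      exact Set.subset_biUnion_of_mem (Set.Icc_subset_Icc_right hab ht)
    rw [Monotone.measure_iUnion hmono]
    exact iSup_le hPU
  have hgood : Uᶜ ⊆ {ω | g (runMin X (τ ω) ω) ≤ γ} := by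
    intro ω hω
    rw [Set.mem_compl_iff, hUdef] at hω
    simp only [Set.mem_iUnion, not_exists] at hω
    have hτmem := Nat.sInf_mem ⟨t₀, hmemS ω⟩
    rw [← hτ ω] at hτmem
    obtain ⟨hτ1, hτγ⟩ := hτmem
    have hy01 : runMin X (τ ω) ω ∈ Set.Icc (0:ℝ) 1 := hrun_mem (τ ω) ω hτ1
    have hF : Fm (runMin X (τ ω) ω) ≤ ENNReal.ofReal (pbar (τ ω) δ) :=
      hBgood (τ ω) ω hτ1 (hω (τ ω) hτ1)
    show g (runMin X (τ ω) ω) ≤ γ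
    rw [hg _]
    by_cases h0 : P {ω' | X 1 ω' < runMin X (τ ω) ω} = 0
    · have hae : (fun ω' => if X 1 ω' < runMin X (τ ω) ω then runMin X (τ ω) ω - X 1 ω' else 0)
          =ᵐ[P] (fun _ => (0:ℝ)) := by
        rw [Filter.EventuallyEq, ae_iff]
        apply measure_mono_null ?_ h0
        intro ω' hω'
        simp only [Set.mem_setOf_eq] at hω' ⊢
        by_contra hc
        push_neg at hc
        exact hω' (by rw [if_neg (not_lt.2 hc)])
      rw [integral_congr_ae hae, integral_zero]
      linarith
    · have hmub := hmubar _ hy01 h0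
      have hFpos : 0 < (P {ω' | X 1 ω' < runMin X (τ ω) ω}).toReal :=
        ENNReal.toReal_pos h0 (measure_ne_top P _)
      have h1 : (∫ ω', (if X 1 ω' < runMin X (τ ω) ω then runMin X (τ ω) ω - X 1 ω' else 0) ∂P)
          ≤ mubar (runMin X (τ ω) ω) * (P {ω' | X 1 ω' < runMin X (τ ω) ω}).toReal :=
        (div_le_iff₀ hFpos).1 hmub
      have h2 : (P {ω' | X 1 ω' < runMin X (τ ω) ω}).toReal ≤ pbar (τ ω) δ := by
        apply ENNReal.toReal_le_of_le_ofReal (pbar_pos hδ0 hτ1).le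
        exact hF
      have h3 : mubar (runMin X (τ ω) ω) * (P {ω' | X 1 ω' < runMin X (τ ω) ω}).toReal
          ≤ mubar (runMin X (τ ω) ω) * pbar (τ ω) δ :=
        mul_le_mul_of_nonneg_left h2 (hmubar_mem _ hy01).1
      linarith
  calc ENNReal.ofReal (1 - δ) = 1 - ENNReal.ofReal δ := by
        rw [← ENNReal.ofReal_one, ← ENNReal.ofReal_sub _ hδ0.le]
    _ ≤ 1 - P U := tsub_le_tsub_left hPUlim 1
    _ ≤ P Uᶜ := by
        rw [measure_compl hUmeas (measure_ne_top P U), measure_univ]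
    _ ≤ P {ω | g (runMin X (τ ω) ω) ≤ γ} := measure_mono hgood
end

section
/- Fix ε > 0 and δ ∈ (0,1), and define p̃_t(δ) = min{1, inf{q ∈ [0, e^{−1}) : ∫_0^q (1−θ)^{−t} · ε/(θ (log(1/θ))^{1+ε}) dθ ≥ 1/δ}}, with inf ∅ = ∞. Then asymptotically as t → ∞, 1 ≤ liminf_{t → ∞} p̃_t(δ)/((log log t)/t) ≤ limsup_{t → ∞} p̃_t(δ)/((log log t)/t) ≤ 1 + ε. -/
open MeasureTheory Filter Set

noncomputable def ptg (ε θ : ℝ) : ℝ := ε / (θ * Real.log (1 / θ) ^ (1 + ε))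
noncomputable def ptF (ε x : ℝ) : ℝ := Real.log (1 / x) ^ (-ε)
noncomputable def pth (ε : ℝ) (t : ℕ) (θ : ℝ) : ℝ := ((1 - θ) ^ t)⁻¹ * ptg ε θ

lemma hasDerivAt_ptF {ε : ℝ} (hε : 0 < ε) {x : ℝ} (hx : 0 < x) (hx1 : x < 1) :
    HasDerivAt (ptF ε) (ptg ε x) x := by
  have hL : 0 < Real.log (1 / x) := by
    rw [one_div, Real.log_inv]
    simpa using Real.log_neg hx hx1
  have h1 : HasDerivAt (fun y : ℝ => Real.log (1 / y)) (-x⁻¹) x := by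
    have : HasDerivAt (fun y : ℝ => -Real.log y) (-x⁻¹) x :=
      ((Real.hasDerivAt_log hx.ne').neg)
    refine this.congr_of_eventuallyEq ?_
    filter_upwards [eventually_gt_nhds hx] with y hy
    rw [one_div, Real.log_inv]
  have h2 : HasDerivAt (fun y : ℝ => y ^ (-ε)) (-ε * Real.log (1 / x) ^ (-ε - 1))
      (Real.log (1 / x)) := Real.hasDerivAt_rpow_const (Or.inl hL.ne')
  have := h2.comp x h1
  refine this.congr_deriv ?_
  unfold ptg
  have hLe : (0:ℝ) < Real.log (1 / x) ^ ε := Real.rpow_pos_of_pos hL ε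
  rw [Real.rpow_sub hL, Real.rpow_one, Real.rpow_neg hL.le, Real.rpow_add hL, Real.rpow_one]
  field_simp

lemma ptg_pos {ε : ℝ} (hε : 0 < ε) {x : ℝ} (hx : 0 < x) (hx1 : x < 1) : 0 < ptg ε x := by
  have hL : 0 < Real.log (1 / x) := by
    rw [one_div, Real.log_inv]; simpa using Real.log_neg hx hx1
  exact div_pos hε (mul_pos hx (Real.rpow_pos_of_pos hL _))

lemma tendsto_ptF_zero {ε : ℝ} (hε : 0 < ε) :
    Tendsto (ptF ε) (nhdsWithin 0 (Ioi 0)) (nhds 0) := by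
  have h1 : Tendsto (fun x : ℝ => Real.log (1 / x)) (nhdsWithin 0 (Ioi 0)) atTop := by
    have h := tendsto_neg_atBot_atTop.comp Real.tendsto_log_nhdsGT_zero
    refine h.congr fun x => ?_
    simp [one_div, Real.log_inv]
  exact (tendsto_rpow_neg_atTop hε).comp h1

lemma contOn_ptF {ε : ℝ} (hε : 0 < ε) {q : ℝ} (hq : 0 < q) (hq1 : q < 1) :
    ContinuousOn (ptF ε) (Icc 0 q) := by
  intro x hx
  rcases eq_or_lt_of_le hx.1 with h0 | h0
  · have hx0 : x = 0 := h0.symm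
    subst hx0
    have hF0 : ptF ε 0 = 0 := by
      unfold ptF
      rw [div_zero, Real.log_zero, Real.zero_rpow (neg_ne_zero.mpr hε.ne')]
    have h1 : ContinuousWithinAt (ptF ε) {0} 0 := continuousWithinAt_singleton
    have h2 : ContinuousWithinAt (ptF ε) (Ioi 0) 0 := by
      rw [ContinuousWithinAt, hF0]; exact tendsto_ptF_zero hε
    exact (h1.union h2).mono (fun y hy => by
      rcases eq_or_lt_of_le hy.1 with h | h
      · exact Or.inl h.symm
      · exact Or.inr h)
  · exact ((hasDerivAt_ptF hε h0 (lt_of_le_of_lt hx.2 hq1)).continuousAt).continuousWithinAt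

lemma integrableOn_ptg {ε : ℝ} (hε : 0 < ε) {q : ℝ} (hq : 0 < q) (hq1 : q < 1) :
    IntegrableOn (ptg ε) (Ioo 0 q) := by
  have := intervalIntegral.integrableOn_deriv_of_nonneg (a := 0) (b := q)
    (contOn_ptF hε hq hq1)
    (fun x hx => hasDerivAt_ptF hε hx.1 (hx.2.trans hq1))
    (fun x hx => (ptg_pos hε hx.1 (hx.2.trans hq1)).le)
  exact this.mono_set Ioo_subset_Ioc_self

lemma integral_ptg {ε : ℝ} (hε : 0 < ε) {q : ℝ} (hq : 0 < q) (hq1 : q < 1) :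
    ∫ θ in Ioo 0 q, ptg ε θ = ptF ε q := by
  have hint : IntervalIntegrable (ptg ε) volume 0 q := by
    rw [intervalIntegrable_iff_integrableOn_Ioo_of_le hq.le]
    exact integrableOn_ptg hε hq hq1
  have h := intervalIntegral.integral_eq_sub_of_hasDerivAt_of_tendsto (f := ptF ε)
    (f' := ptg ε) hq (fun x hx => hasDerivAt_ptF hε hx.1 (hx.2.trans hq1)) hint
    (tendsto_ptF_zero hε)
    ((hasDerivAt_ptF hε hq hq1).continuousAt.continuousWithinAt.tendsto)
  rw [intervalIntegral.integral_of_le hq.le, integral_Ioc_eq_integral_Ioo] at h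
  rw [h, sub_zero]

lemma continuousAt_ptg {ε : ℝ} (hε : 0 < ε) {x : ℝ} (hx : 0 < x) (hx1 : x < 1) :
    ContinuousAt (ptg ε) x := by
  have hL : 0 < Real.log (1 / x) := by
    rw [one_div, Real.log_inv]; simpa using Real.log_neg hx hx1
  have hlog : ContinuousAt (fun θ : ℝ => Real.log (1 / θ)) x := by
    have := (Real.continuousAt_log (by positivity : (1:ℝ)/x ≠ 0)).comp
      ((continuousAt_const.div continuousAt_id hx.ne'))
    exact this
  have hrp : ContinuousAt (fun θ : ℝ => Real.log (1 / θ) ^ (1 + ε)) x :=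
    hlog.rpow_const (Or.inl hL.ne')
  exact continuousAt_const.div (continuousAt_id.mul hrp)
    (by positivity)

lemma integral_ptg_sub {ε : ℝ} (hε : 0 < ε) {a b : ℝ} (ha : 0 < a) (hab : a ≤ b)
    (hb1 : b < 1) : ∫ θ in Ioo a b, ptg ε θ = ptF ε b - ptF ε a := by
  have hint : IntervalIntegrable (ptg ε) volume a b := by
    apply ContinuousOn.intervalIntegrable
    intro x hx
    rw [uIcc_of_le hab] at hx
    exact (continuousAt_ptg hε (ha.trans_le hx.1)
      (lt_of_le_of_lt hx.2 hb1)).continuousWithinAt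
  have h := intervalIntegral.integral_eq_sub_of_hasDerivAt (f := ptF ε) (f' := ptg ε)
    (fun x hx => by
      rw [uIcc_of_le hab] at hx
      exact hasDerivAt_ptF hε (ha.trans_le hx.1) (lt_of_le_of_lt hx.2 hb1)) hint
  rw [intervalIntegral.integral_of_le hab, integral_Ioc_eq_integral_Ioo] at h
  exact h

lemma pth_nonneg {ε : ℝ} (hε : 0 < ε) {t : ℕ} {x : ℝ} (hx : 0 < x) (hx1 : x < 1) :
    0 ≤ pth ε t x := by
  have h1 : (0:ℝ) < 1 - x := by linarith
  exact mul_nonneg (by positivity) (ptg_pos hε hx hx1).le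

lemma pth_le {ε : ℝ} (hε : 0 < ε) {t : ℕ} {x b : ℝ} (hx : 0 < x) (hxb : x ≤ b) (hb1 : b < 1) :
    pth ε t x ≤ ((1 - b) ^ t)⁻¹ * ptg ε x := by
  have hb : (0:ℝ) < 1 - b := by linarith
  have h1 : (1 - b) ^ t ≤ (1 - x) ^ t := pow_le_pow_left₀ hb.le (by linarith) t
  have h2 : ((1 - x) ^ t)⁻¹ ≤ ((1 - b) ^ t)⁻¹ := by
    apply inv_anti₀ (by positivity) h1
  exact mul_le_mul_of_nonneg_right h2 (ptg_pos hε hx (lt_of_le_of_lt hxb hb1)).le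

lemma pth_ge {ε : ℝ} (hε : 0 < ε) {t : ℕ} {x a : ℝ} (ha : 0 < a) (hax : a ≤ x) (hx1 : x < 1) :
    Real.exp (t * a) * ptg ε x ≤ pth ε t x := by
  have hx : (0:ℝ) < 1 - x := by linarith
  have hA : (1 - x) ^ t ≤ (1 - a) ^ t := pow_le_pow_left₀ hx.le (by linarith) t
  have hB : (1 - a) ^ t ≤ Real.exp (-(t * a)) := by
    calc (1 - a) ^ t ≤ Real.exp (-a) ^ t :=
          pow_le_pow_left₀ (by linarith) (by linarith [Real.add_one_le_exp (-a)]) t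
      _ = Real.exp (-(t * a)) := by rw [← Real.exp_nat_mul, mul_neg]
  have h1 : Real.exp (t * a) ≤ ((1 - x) ^ t)⁻¹ := by
    calc Real.exp (t * a) = (Real.exp (-(t * a)))⁻¹ := by rw [Real.exp_neg, inv_inv]
      _ ≤ ((1 - x) ^ t)⁻¹ := inv_anti₀ (by positivity) (hA.trans hB)
  exact mul_le_mul_of_nonneg_right h1 (ptg_pos hε (ha.trans_le hax) hx1).le

lemma aesm_pth {ε : ℝ} (hε : 0 < ε) {t : ℕ} {q : ℝ} (hq : 0 < q) (hq1 : q < 1) :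
    AEStronglyMeasurable (pth ε t) (volume.restrict (Ioo 0 q)) := by
  apply ContinuousOn.aestronglyMeasurable _ measurableSet_Ioo
  intro x hx
  have hx1 : x < 1 := hx.2.trans hq1
  have : ContinuousAt (pth ε t) x := by
    have h1 : ContinuousAt (fun θ : ℝ => ((1 - θ) ^ t)⁻¹) x := by
      have : (1 - x) ^ t ≠ 0 := by
        have : (0:ℝ) < 1 - x := by linarith
        positivity
      exact ((continuousAt_const.sub continuousAt_id).pow t).inv₀ this
    exact h1.mul (continuousAt_ptg hε hx.1 hx1)
  exact this.continuousWithinAt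

lemma integrableOn_pth {ε : ℝ} (hε : 0 < ε) {t : ℕ} {q : ℝ} (hq : 0 < q) (hq1 : q < 1) :
    IntegrableOn (pth ε t) (Ioo 0 q) := by
  refine Integrable.mono' (((integrableOn_ptg hε hq hq1).const_mul (((1 - q) ^ t)⁻¹)))
    (aesm_pth hε hq hq1) ?_
  filter_upwards [ae_restrict_mem measurableSet_Ioo] with x hx
  rw [Real.norm_of_nonneg (pth_nonneg hε hx.1 (hx.2.trans hq1))]
  exact pth_le hε hx.1 hx.2.le hq1

lemma core_lower {ε : ℝ} (hε : 0 < ε) {t : ℕ} {q' q : ℝ} (hq' : 0 < q') (hqq : q' < q)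
    (hq1 : q < 1) :
    Real.exp (t * q') * (ptF ε q - ptF ε q') ≤ ∫ θ in Ioo 0 q, pth ε t θ := by
  have hq : 0 < q := hq'.trans hqq
  have hsub : Ioo q' q ⊆ Ioo 0 q := Ioo_subset_Ioo hq'.le le_rfl
  have hgint : IntegrableOn (ptg ε) (Ioo q' q) :=
    (integrableOn_ptg hε hq hq1).mono_set hsub
  have hhint : IntegrableOn (pth ε t) (Ioo q' q) :=
    (integrableOn_pth hε hq hq1).mono_set hsub
  have step1 : ∫ θ in Ioo q' q, Real.exp (t * q') * ptg ε θ ≤ ∫ θ in Ioo q' q, pth ε t θ := by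
    refine setIntegral_mono_on (hgint.const_mul _) hhint measurableSet_Ioo ?_
    intro x hx
    exact pth_ge hε hq' hx.1.le (hx.2.trans hq1)
  have step2 : ∫ θ in Ioo q' q, Real.exp (t * q') * ptg ε θ
      = Real.exp (t * q') * (ptF ε q - ptF ε q') := by
    rw [integral_const_mul, integral_ptg_sub hε hq' hqq.le hq1]
  have step3 : ∫ θ in Ioo q' q, pth ε t θ ≤ ∫ θ in Ioo 0 q, pth ε t θ := by
    refine setIntegral_mono_set (integrableOn_pth hε hq hq1) ?_ (HasSubset.Subset.eventuallyLE hsub)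
    filter_upwards [ae_restrict_mem measurableSet_Ioo] with x hx
    exact pth_nonneg hε hx.1 (hx.2.trans hq1)
  calc Real.exp (t * q') * (ptF ε q - ptF ε q')
      = ∫ θ in Ioo q' q, Real.exp (t * q') * ptg ε θ := step2.symm
    _ ≤ ∫ θ in Ioo q' q, pth ε t θ := step1
    _ ≤ _ := step3

lemma core_upper {ε : ℝ} (hε : 0 < ε) {t : ℕ} {q' q : ℝ} (hq' : 0 < q') (hqq : q' < q)
    (hq1 : q < 1) :
    ∫ θ in Ioo 0 q, pth ε t θ ≤ ((1 - q') ^ t)⁻¹ * ptF ε q'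
      + ((1 - q) ^ t)⁻¹ * (ε / (q' * Real.log (1 / q) ^ (1 + ε))) * q := by
  have hq : 0 < q := hq'.trans hqq
  have hLq : 0 < Real.log (1 / q) := by
    rw [one_div, Real.log_inv]; simpa using Real.log_neg hq hq1
  have hq'1 : q' < 1 := hqq.trans hq1
  have hunion : Ioo 0 q' ∪ Ico q' q = Ioo 0 q := Ioo_union_Ico_eq_Ioo hq' hqq.le
  have hsub1 : Ioo 0 q' ⊆ Ioo 0 q := Ioo_subset_Ioo le_rfl hqq.le
  have hsub2 : Ico q' q ⊆ Ioo 0 q := fun x hx => ⟨hq'.trans_le hx.1, hx.2⟩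
  have hint1 : IntegrableOn (pth ε t) (Ioo 0 q') := (integrableOn_pth hε hq hq1).mono_set hsub1
  have hint2 : IntegrableOn (pth ε t) (Ico q' q) := (integrableOn_pth hε hq hq1).mono_set hsub2
  have hsplit : ∫ θ in Ioo 0 q, pth ε t θ
      = (∫ θ in Ioo 0 q', pth ε t θ) + ∫ θ in Ico q' q, pth ε t θ := by
    rw [← hunion]
    refine setIntegral_union ?_ measurableSet_Ico hint1 hint2
    rw [Set.disjoint_left]
    rintro x hx1 hx2
    exact absurd hx2.1 (not_le.mpr hx1.2)
  set M : ℝ := ((1 - q) ^ t)⁻¹ * (ε / (q' * Real.log (1 / q) ^ (1 + ε))) with hM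
  have hMpos : 0 < M := by
    have h1q : (0:ℝ) < 1 - q := by linarith
    apply mul_pos (by positivity) (div_pos hε (by positivity))
  have piece1 : ∫ θ in Ioo 0 q', pth ε t θ ≤ ((1 - q') ^ t)⁻¹ * ptF ε q' := by
    have : ∫ θ in Ioo 0 q', pth ε t θ ≤ ∫ θ in Ioo 0 q', ((1 - q') ^ t)⁻¹ * ptg ε θ := by
      refine setIntegral_mono_on hint1 ((integrableOn_ptg hε hq' hq'1).const_mul _)
        measurableSet_Ioo ?_
      intro x hx
      exact pth_le hε hx.1 hx.2.le hq'1
    rwa [integral_const_mul, integral_ptg hε hq' hq'1] at this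
  have piece2 : ∫ θ in Ico q' q, pth ε t θ ≤ M * q := by
    have hb : ∫ θ in Ico q' q, pth ε t θ ≤ ∫ _θ in Ico q' q, M := by
      refine setIntegral_mono_on hint2 (integrableOn_const ?_)
        measurableSet_Ico ?_
      · rw [Real.volume_Ico]; exact ENNReal.ofReal_ne_top
      · intro x hx
        have hx0 : 0 < x := hq'.trans_le hx.1
        have hx1 : x < 1 := hx.2.trans hq1
        have h1x : (0:ℝ) < 1 - x := by linarith
        have h1q : (0:ℝ) < 1 - q := by linarith
        have hLx : Real.log (1 / q) ≤ Real.log (1 / x) := by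
          rw [one_div, one_div, Real.log_inv, Real.log_inv]
          exact neg_le_neg (Real.log_le_log hx0 hx.2.le)
        have hgb : ptg ε x ≤ ε / (q' * Real.log (1 / q) ^ (1 + ε)) := by
          unfold ptg
          apply div_le_div_of_nonneg_left hε.le (by positivity)
          apply mul_le_mul hx.1 (Real.rpow_le_rpow hLq.le hLx (by linarith)) (by positivity)
            hx0.le
        have hinv : ((1 - x) ^ t)⁻¹ ≤ ((1 - q) ^ t)⁻¹ := by
          apply inv_anti₀ (by positivity)
          exact pow_le_pow_left₀ h1q.le (by linarith [hx.2]) t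
        calc pth ε t x ≤ ((1 - q) ^ t)⁻¹ * ptg ε x :=
              mul_le_mul_of_nonneg_right hinv (ptg_pos hε hx0 hx1).le
          _ ≤ M := mul_le_mul_of_nonneg_left hgb (by positivity)
    have hc : ∫ _θ in Ico q' q, M = M * (q - q') := by
      rw [setIntegral_const, Real.volume_real_Ico, max_eq_left (by linarith), smul_eq_mul,
        mul_comm]
    calc ∫ θ in Ico q' q, pth ε t θ ≤ M * (q - q') := by rw [← hc]; exact hb
      _ ≤ M * q := by nlinarith
  calc ∫ θ in Ioo 0 q, pth ε t θ = _ := hsplit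
    _ ≤ ((1 - q') ^ t)⁻¹ * ptF ε q' + M * q := add_le_add piece1 piece2

lemma exp_neg_le_one_sub {x : ℝ} (h0 : 0 ≤ x) (h2 : x ≤ 1/2) :
    Real.exp (-(x + x ^ 2)) ≤ 1 - x := by
  have key : ∀ y : ℝ, HasDerivAt (fun y => (1 - y) * Real.exp (y + y ^ 2))
      (Real.exp (y + y ^ 2) * (y - 2 * y ^ 2)) y := by
    intro y
    have h1 : HasDerivAt (fun y : ℝ => 1 - y) (-1) y := by
      simpa using (hasDerivAt_id y).const_sub 1
    have hu : HasDerivAt (fun y : ℝ => y + y ^ 2) (1 + 2 * y) y := by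
      have := (hasDerivAt_id' y).add (hasDerivAt_pow 2 y)
      exact this.congr_deriv (by norm_num)
    have h3 := (Real.hasDerivAt_exp (y + y ^ 2)).comp y hu
    have := h1.mul h3
    exact this.congr_deriv (by simp only [Function.comp_apply]; ring)
  have mono : MonotoneOn (fun y => (1 - y) * Real.exp (y + y ^ 2)) (Icc 0 (1/2)) := by
    apply monotoneOn_of_deriv_nonneg (convex_Icc _ _)
    · exact (Continuous.mul (by continuity) (by continuity)).continuousOn
    · intro y _
      exact (key y).differentiableAt.differentiableWithinAt
    · intro y hy
      rw [interior_Icc] at hy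
      rw [(key y).deriv]
      have hE := Real.exp_pos (y + y ^ 2)
      have h1 : 0 ≤ y - 2 * y ^ 2 := by nlinarith [hy.1, hy.2]
      positivity
  have h := mono (left_mem_Icc.mpr (by norm_num)) (mem_Icc.mpr ⟨h0, h2⟩) h0
  norm_num at h
  have hE : 0 < Real.exp (x + x ^ 2) := Real.exp_pos _
  rw [Real.exp_neg]
  calc (Real.exp (x + x ^ 2))⁻¹ = (Real.exp (x + x ^ 2))⁻¹ * 1 := (mul_one _).symm
    _ ≤ (Real.exp (x + x ^ 2))⁻¹ * ((1 - x) * Real.exp (x + x ^ 2)) :=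
        mul_le_mul_of_nonneg_left h (by positivity)
    _ = 1 - x := by field_simp

lemma mvt_rpow {ε A B : ℝ} (hε : 0 < ε) (hA : 0 < A) (hAB : A ≤ B) :
    ε * B ^ (-(1 + ε)) * (B - A) ≤ A ^ (-ε) - B ^ (-ε) := by
  have hB : 0 < B := hA.trans_le hAB
  set c : ℝ := ε * B ^ (-(1 + ε)) with hc
  have hexp : -(1 + ε) = -ε - 1 := by ring
  have key : ∀ y : ℝ, 0 < y → HasDerivAt (fun y : ℝ => y ^ (-ε) + c * y)
      (-ε * y ^ (-ε - 1) + c) y := by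
    intro y hy0
    have hlin : HasDerivAt (fun y : ℝ => c * y) c y := by
      simpa using (hasDerivAt_id y).const_mul c
    exact (Real.hasDerivAt_rpow_const (Or.inl hy0.ne')).add hlin
  have anti : AntitoneOn (fun y : ℝ => y ^ (-ε) + c * y) (Icc A B) := by
    apply antitoneOn_of_deriv_nonpos (convex_Icc _ _)
    · intro y hy
      exact (key y (hA.trans_le hy.1)).differentiableAt.continuousAt.continuousWithinAt
    · intro y hy
      rw [interior_Icc] at hy
      exact (key y (hA.trans hy.1)).differentiableAt.differentiableWithinAt
    · intro y hy
      rw [interior_Icc] at hy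
      have hy0 : 0 < y := hA.trans hy.1
      rw [(key y hy0).deriv]
      have : B ^ (-ε - 1) ≤ y ^ (-ε - 1) :=
        Real.rpow_le_rpow_of_nonpos hy0 hy.2.le (by linarith)
      have hcB : c = ε * B ^ (-ε - 1) := by rw [hc, hexp]
      nlinarith [this, hε.le]
  have h := anti (left_mem_Icc.mpr hAB) (right_mem_Icc.mpr hAB) hAB
  simp only at h
  linarith [h]

lemma tendsto_LL : Tendsto (fun t : ℕ => Real.log (Real.log t)) atTop atTop :=
  Real.tendsto_log_atTop.comp (Real.tendsto_log_atTop.comp tendsto_natCast_atTop_atTop)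

lemma tendsto_L : Tendsto (fun t : ℕ => Real.log t) atTop atTop :=
  Real.tendsto_log_atTop.comp tendsto_natCast_atTop_atTop

lemma tendsto_LL_div : Tendsto (fun t : ℕ => Real.log (Real.log t) / t) atTop (nhds 0) := by
  have hL : Tendsto (fun t : ℕ => Real.log t / t) atTop (nhds 0) := by
    have h := Real.isLittleO_log_id_atTop.tendsto_div_nhds_zero
    exact h.comp tendsto_natCast_atTop_atTop
  apply squeeze_zero' ?_ ?_ hL
  · filter_upwards [tendsto_LL.eventually_ge_atTop 0, eventually_gt_atTop 0] with t h1 h2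
    positivity
  · filter_upwards [tendsto_L.eventually_gt_atTop 0, eventually_gt_atTop 0] with t h1 h2
    apply div_le_div_of_nonneg_right ?_ (by positivity)  -- maybe wrong name
    calc Real.log (Real.log t) ≤ Real.log t - 1 := Real.log_le_sub_one_of_pos h1
      _ ≤ Real.log t := by linarith

lemma ub_event {ε δ : ℝ} (hε : 0 < ε) (hδ : 0 < δ) {c : ℝ} (hc : 1 + ε < c) :
    ∀ᶠ t : ℕ in atTop,
      (c * (Real.log (Real.log t) / t) ∈ Ico (0:ℝ) (Real.exp (-1))) ∧
      1 / δ ≤ ∫ θ in Ioo (0:ℝ) (c * (Real.log (Real.log t) / t)), pth ε (t : ℕ) θ := by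
  set a : ℝ := (1 + ε + c) / 2 with ha
  have haε : 1 + ε < a := by rw [ha]; linarith
  have hac : a < c := by rw [ha]; linarith
  have ha0 : 0 < a := by linarith
  have hc0 : 0 < c := by linarith
  set d : ℝ := Real.log (c / a) with hd
  have hd0 : 0 < d := Real.log_pos (by rw [lt_div_iff₀ ha0]; linarith)
  have hkey : Tendsto (fun t : ℕ => Real.log t ^ a * (ε * (2 * Real.log t) ^ (-(1 + ε)) * d))
      atTop atTop := by
    have hx : Tendsto (fun x : ℝ => x ^ a * (ε * (2 * x) ^ (-(1 + ε)) * d)) atTop atTop := by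
      have hbase : Tendsto (fun x : ℝ => ε * d * 2 ^ (-(1 + ε)) * x ^ (a - (1 + ε)))
          atTop atTop := by
        apply Tendsto.const_mul_atTop (by positivity)
        exact tendsto_rpow_atTop (by linarith)
      apply hbase.congr'
      filter_upwards [eventually_gt_atTop 0] with x hx0
      rw [Real.mul_rpow (by norm_num : (0:ℝ) ≤ 2) hx0.le, Real.rpow_sub hx0,
        Real.rpow_neg hx0.le, Real.rpow_neg (by norm_num : (0:ℝ) ≤ 2)]
      have h1 : (0:ℝ) < (2:ℝ) ^ (1 + ε) := by positivity
      have h2 : (0:ℝ) < x ^ (1 + ε) := by positivity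
      field_simp
    exact hx.comp tendsto_L
  have hq0t : Tendsto (fun t : ℕ => c * (Real.log (Real.log t) / t)) atTop (nhds 0) := by
    simpa using tendsto_LL_div.const_mul c
  filter_upwards [eventually_gt_atTop 0,
    tendsto_LL.eventually_ge_atTop 1,
    tendsto_L.eventually_ge_atTop (max 1 d),
    hq0t.eventually (eventually_lt_nhds (Real.exp_pos (-1))),
    hkey.eventually_ge_atTop (1 / δ)] with t ht0 hLL1 hLd hqe hbig
  have htR : (0:ℝ) < t := by exact_mod_cast ht0
  set L : ℝ := Real.log t with hLdef
  set LL : ℝ := Real.log L with hLLdef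
  have hL1 : 1 ≤ L := le_trans (le_max_left _ _) hLd
  have hdL : d ≤ L := le_trans (le_max_right _ _) hLd
  have hL0 : 0 < L := by linarith
  have hLL0 : 0 < LL := by linarith
  set q : ℝ := c * (LL / t) with hq
  set q' : ℝ := a * (LL / t) with hq'
  have hq0 : 0 < q := by positivity
  have hq'0 : 0 < q' := by positivity
  have hq'q : q' < q := mul_lt_mul_of_pos_right hac (by positivity)
  have hqe' : q < Real.exp (-1) := hqe
  have hexp1 : Real.exp (-1 : ℝ) < 1 := by
    rw [Real.exp_lt_one_iff]; norm_num
  have hq1 : q < 1 := hqe'.trans hexp1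
  have hq'1 : q' < 1 := hq'q.trans hq1
  -- A and B
  set A : ℝ := Real.log (1 / q) with hA
  set B : ℝ := Real.log (1 / q') with hB
  have hlogq : A = L - Real.log (c * LL) := by
    rw [hA, hq, one_div, Real.log_inv, ← mul_div_assoc,
      Real.log_div (by positivity : c * LL ≠ 0) htR.ne']
    ring
  have hlogq' : B = L - Real.log (a * LL) := by
    rw [hB, hq', one_div, Real.log_inv, ← mul_div_assoc,
      Real.log_div (by positivity : a * LL ≠ 0) htR.ne']
    ring
  have hBA : B = A + d := by
    rw [hlogq, hlogq', hd, Real.log_mul hc0.ne' hLL0.ne', Real.log_mul ha0.ne' hLL0.ne',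
      Real.log_div hc0.ne' ha0.ne']
    ring
  have hA0 : 0 < A := by
    rw [hA, one_div, Real.log_inv]
    linarith [Real.log_neg hq0 hq1]
  have hAL : A ≤ L := by
    rw [hlogq]
    have : 0 ≤ Real.log (c * LL) := Real.log_nonneg (by nlinarith)
    linarith
  have hB2L : B ≤ 2 * L := by rw [hBA]; linarith
  have hB0 : 0 < B := by rw [hBA]; linarith
  have hcore := core_lower hε (t := t) hq'0 hq'q hq1
  have hexpq' : Real.exp (t * q') = L ^ a := by
    rw [Real.rpow_def_of_pos hL0]
    congr 1
    rw [hq']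
    field_simp
    ring
  have hmvt : ε * B ^ (-(1 + ε)) * d ≤ A ^ (-ε) - B ^ (-ε) := by
    have := mvt_rpow hε hA0 (by rw [hBA]; linarith : A ≤ B)
    rw [hBA] at this ⊢
    simpa using this
  have hBpow : (2 * L) ^ (-(1 + ε)) ≤ B ^ (-(1 + ε)) :=
    Real.rpow_le_rpow_of_nonpos hB0 hB2L (by linarith)
  have hFdiff : ptF ε q - ptF ε q' = A ^ (-ε) - B ^ (-ε) := rfl
  have chain : 1 / δ ≤ ∫ θ in Ioo (0:ℝ) q, pth ε t θ := by
    calc 1 / δ ≤ L ^ a * (ε * (2 * L) ^ (-(1 + ε)) * d) := hbig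
      _ ≤ L ^ a * (ε * B ^ (-(1 + ε)) * d) := by
          have h1 : (0:ℝ) ≤ L ^ a := (Real.rpow_pos_of_pos hL0 a).le
          have h2 : ε * (2 * L) ^ (-(1 + ε)) * d ≤ ε * B ^ (-(1 + ε)) * d := by
            apply mul_le_mul_of_nonneg_right _ hd0.le
            exact mul_le_mul_of_nonneg_left hBpow hε.le
          exact mul_le_mul_of_nonneg_left h2 h1
      _ ≤ L ^ a * (A ^ (-ε) - B ^ (-ε)) := by
          exact mul_le_mul_of_nonneg_left hmvt (Real.rpow_pos_of_pos hL0 a).le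
      _ = Real.exp (t * q') * (ptF ε q - ptF ε q') := by rw [hexpq', hFdiff]
      _ ≤ _ := hcore
  refine ⟨⟨hq0.le, hqe'⟩, ?_⟩
  exact chain

set_option maxHeartbeats 1000000 in
lemma lb_event {ε δ : ℝ} (hε : 0 < ε) (hδ : 0 < δ) {c : ℝ} (hc0 : 0 < c) (hc1 : c < 1) :
    ∀ᶠ t : ℕ in atTop,
      (0 < c * (Real.log (Real.log t) / t)) ∧ (c * (Real.log (Real.log t) / t) ≤ 1) ∧
      (∫ θ in Ioo (0:ℝ) (c * (Real.log (Real.log t) / t)), pth ε (t : ℕ) θ) < 1 / δ ∧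
      IntegrableOn (pth ε t) (Ioo (0:ℝ) (c * (Real.log (Real.log t) / t))) := by
  set lam : ℝ := min (1/2) (ε / (4 * c)) with hlam
  have hlam0 : 0 < lam := lt_min (by norm_num) (by positivity)
  have hlam2 : lam ≤ 1/2 := min_le_left _ _
  have hlamε : lam * c ≤ ε / 4 := by
    have := min_le_right (1/2) (ε / (4 * c))
    calc lam * c ≤ ε / (4 * c) * c := mul_le_mul_of_nonneg_right this hc0.le
      _ = ε / 4 := by field_simp
  -- final numeric bound tendsto
  have hkey : Tendsto (fun t : ℕ =>
      Real.exp (ε / 4 * Real.log (Real.log t) + 1/2) * (Real.log t / 2) ^ (-ε)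
      + Real.exp (c * Real.log (Real.log t) + 1/2)
        * (ε / (lam * (Real.log t / 2) ^ (1 + ε)))) atTop (nhds 0) := by
    have hx : Tendsto (fun x : ℝ =>
        Real.exp (ε / 4 * Real.log x + 1/2) * (x / 2) ^ (-ε)
        + Real.exp (c * Real.log x + 1/2) * (ε / (lam * (x / 2) ^ (1 + ε))))
        atTop (nhds 0) := by
      have h1 : Tendsto (fun x : ℝ => Real.exp (1/2) * 2 ^ ε * x ^ (ε/4 - ε)) atTop (nhds 0) := by
        have := tendsto_rpow_neg_atTop (y := ε - ε/4) (by linarith)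
        have h2 := this.const_mul (Real.exp (1/2) * 2 ^ ε)
        rw [mul_zero] at h2
        apply h2.congr
        intro x
        congr 1
        ring_nf
      have h2 : Tendsto (fun x : ℝ => Real.exp (1/2) * (ε / lam) * 2 ^ (1+ε) * x ^ (c - (1+ε)))
          atTop (nhds 0) := by
        have := tendsto_rpow_neg_atTop (y := (1+ε) - c) (by linarith)
        have h2 := this.const_mul (Real.exp (1/2) * (ε / lam) * 2 ^ (1+ε))
        rw [mul_zero] at h2
        apply h2.congr
        intro x
        congr 1
        ring_nf
      have hsum := h1.add h2
      rw [add_zero] at hsum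
      apply hsum.congr'
      filter_upwards [eventually_gt_atTop 0] with x hx0
      have hx2 : (0:ℝ) < x / 2 := by linarith
      have e1 : Real.exp (ε / 4 * Real.log x) = x ^ (ε / 4) := by
        rw [Real.rpow_def_of_pos hx0, mul_comm]
      have e2 : Real.exp (c * Real.log x) = x ^ c := by
        rw [Real.rpow_def_of_pos hx0, mul_comm]
      rw [Real.exp_add, Real.exp_add, e1, e2]
      rw [Real.div_rpow hx0.le (by norm_num : (0:ℝ) ≤ 2),
        Real.div_rpow hx0.le (by norm_num : (0:ℝ) ≤ 2),
        Real.rpow_neg hx0.le, Real.rpow_neg (by norm_num : (0:ℝ) ≤ 2),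
        Real.rpow_sub hx0, Real.rpow_sub hx0, Real.rpow_add hx0, Real.rpow_one]
      have p1 : (0:ℝ) < x ^ ε := Real.rpow_pos_of_pos hx0 _
      have p2 : (0:ℝ) < x ^ (ε/4) := Real.rpow_pos_of_pos hx0 _
      have p3 : (0:ℝ) < x ^ c := Real.rpow_pos_of_pos hx0 _
      have p4 : (0:ℝ) < (2:ℝ) ^ ε := by positivity
      have p5 : (0:ℝ) < (2:ℝ) ^ (1+ε) := by positivity
      field_simp
    exact hx.comp tendsto_L
  have hq0t : Tendsto (fun t : ℕ => c * (Real.log (Real.log t) / t)) atTop (nhds 0) := by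
    simpa using tendsto_LL_div.const_mul c
  have hqsq : Tendsto (fun t : ℕ => (t:ℝ) * (c * (Real.log (Real.log t) / t)) ^ 2)
      atTop (nhds 0) := by
    have hbase : Tendsto (fun t : ℕ => c ^ 2 * (Real.log t ^ 2 / t)) atTop (nhds 0) := by
      have h0 : Tendsto (fun x : ℝ => Real.log x ^ 2 / x) atTop (nhds 0) := by
        simpa using
          (Real.isLittleO_pow_log_id_atTop (n := 2)).tendsto_div_nhds_zero
      have := (h0.comp tendsto_natCast_atTop_atTop).const_mul (c ^ 2)
      simpa using this
    apply squeeze_zero' ?_ ?_ hbase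
    · filter_upwards [eventually_gt_atTop 0] with t ht0
      have htR : (0:ℝ) < t := by exact_mod_cast ht0
      positivity
    · filter_upwards [eventually_gt_atTop 0, tendsto_L.eventually_ge_atTop 1,
        tendsto_LL.eventually_ge_atTop 0] with t ht0 hL1 hLL0
      have htR : (0:ℝ) < t := by exact_mod_cast ht0
      have hLLle : Real.log (Real.log t) ≤ Real.log t := by
        calc Real.log (Real.log t) ≤ Real.log t - 1 :=
              Real.log_le_sub_one_of_pos (by linarith)
          _ ≤ Real.log t := by linarith
      have key : (t:ℝ) * (c * (Real.log (Real.log t) / t)) ^ 2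
          = c ^ 2 * (Real.log (Real.log t) ^ 2 / t) := by
        field_simp
      rw [key]
      have : Real.log (Real.log t) ^ 2 ≤ Real.log t ^ 2 := by nlinarith
      apply mul_le_mul_of_nonneg_left _ (by positivity)
      exact div_le_div_of_nonneg_right this htR.le
  have hlittle := (Real.isLittleO_log_id_atTop.comp_tendsto tendsto_L).bound
    (c := 1/(2*c)) (by positivity)
  filter_upwards [eventually_gt_atTop 0,
    tendsto_LL.eventually_ge_atTop 1,
    tendsto_L.eventually_ge_atTop 1,
    hq0t.eventually (eventually_le_nhds (by norm_num : (0:ℝ) < 1/2)),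
    hqsq.eventually (eventually_le_nhds (by norm_num : (0:ℝ) < 1/2)),
    hlittle,
    hkey.eventually (eventually_lt_nhds (by positivity : (0:ℝ) < 1/δ))]
    with t ht0 hLL1 hL1 hq12 htq2 hlit hfin
  have htR : (0:ℝ) < t := by exact_mod_cast ht0
  set L : ℝ := Real.log t with hLdef
  set LL : ℝ := Real.log L with hLLdef
  have hL0 : 0 < L := by linarith
  have hLL0 : 0 < LL := by linarith
  set q : ℝ := c * (LL / t) with hq
  set q' : ℝ := lam * q with hq'
  have hq0 : 0 < q := by positivity
  have hq'0 : 0 < q' := by positivity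
  have hq'q : q' < q := by
    have : lam < 1 := lt_of_le_of_lt hlam2 (by norm_num)
    nlinarith
  have hq2 : q ≤ 1/2 := hq12
  have hq1 : q < 1 := lt_of_le_of_lt hq2 (by norm_num)
  have hq'2 : q' ≤ 1/2 := le_trans hq'q.le hq2
  -- c * LL ≤ L / 2
  have hcLL : c * LL ≤ L / 2 := by
    have h := hlit
    simp only [Function.comp, id] at h
    rw [Real.norm_of_nonneg (by linarith : (0:ℝ) ≤ LL),
      Real.norm_of_nonneg (by linarith : (0:ℝ) ≤ L)] at h
    calc c * LL ≤ c * (1/(2*c) * L) := by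
          apply mul_le_mul_of_nonneg_left h hc0.le
      _ = L / 2 := by field_simp
  -- log(1/q) ≥ L/2
  have hlogq : L / 2 ≤ Real.log (1 / q) := by
    have hA : Real.log (1 / q) = L - Real.log (c * LL) := by
      rw [hq, one_div, Real.log_inv, ← mul_div_assoc,
        Real.log_div (by positivity : c * LL ≠ 0) htR.ne']
      ring
    have h1 : Real.log (c * LL) ≤ c * LL := by
      calc Real.log (c * LL) ≤ c * LL - 1 := Real.log_le_sub_one_of_pos (by positivity)
        _ ≤ c * LL := by linarith
    rw [hA]
    linarith
  have hlogq' : L / 2 ≤ Real.log (1 / q') := by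
    refine le_trans hlogq (Real.log_le_log (by positivity) ?_)
    exact one_div_le_one_div_of_le hq'0 hq'q.le
  have hL2 : (0:ℝ) < L / 2 := by linarith
  -- exp bounds on the pow-inverses
  have hexpinv : ∀ r : ℝ, 0 < r → r ≤ 1/2 →
      ((1 - r) ^ t)⁻¹ ≤ Real.exp (t * r + t * r ^ 2) := by
    intro r hr0 hr2
    have h1 : Real.exp (-(r + r ^ 2)) ≤ 1 - r := exp_neg_le_one_sub hr0.le hr2
    have h2 : Real.exp (-(r + r ^ 2)) ^ t ≤ (1 - r) ^ t :=
      pow_le_pow_left₀ (Real.exp_pos _).le h1 t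
    have h3 : Real.exp (-(r + r ^ 2)) ^ t = Real.exp (-(t * r + t * r ^ 2)) := by
      rw [← Real.exp_nat_mul]
      congr 1
      ring
    calc ((1 - r) ^ t)⁻¹ ≤ (Real.exp (-(t * r + t * r ^ 2)))⁻¹ := by
          apply inv_anti₀ (by positivity)
          rw [← h3]; exact h2
      _ = Real.exp (t * r + t * r ^ 2) := by rw [Real.exp_neg, inv_inv]
  have htq' : (t:ℝ) * q' = lam * c * LL := by
    rw [hq', hq]; field_simp
  have htq : (t:ℝ) * q = c * LL := by
    rw [hq]; field_simp
  have htq'2 : (t:ℝ) * q' ^ 2 ≤ 1/2 := by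
    refine le_trans ?_ htq2
    have h : q' ^ 2 ≤ q ^ 2 := pow_le_pow_left₀ hq'0.le hq'q.le 2
    exact mul_le_mul_of_nonneg_left h htR.le
  have hterm1 : ((1 - q') ^ t)⁻¹ * ptF ε q'
      ≤ Real.exp (ε / 4 * LL + 1/2) * (L / 2) ^ (-ε) := by
    have hFb : ptF ε q' ≤ (L / 2) ^ (-ε) :=
      Real.rpow_le_rpow_of_nonpos hL2 hlogq' (by linarith)
    have hFnn : 0 ≤ ptF ε q' := Real.rpow_nonneg (by linarith) _
    have hE : ((1 - q') ^ t)⁻¹ ≤ Real.exp (ε / 4 * LL + 1/2) := by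
      refine le_trans (hexpinv q' hq'0 hq'2) (Real.exp_le_exp.mpr ?_)
      have h1 : (t:ℝ) * q' ≤ ε / 4 * LL := by
        rw [htq']
        exact mul_le_mul_of_nonneg_right hlamε hLL0.le
      linarith
    apply mul_le_mul hE hFb hFnn (Real.exp_pos _).le
  have hterm2 : ((1 - q) ^ t)⁻¹ * (ε / (q' * Real.log (1 / q) ^ (1 + ε))) * q
      ≤ Real.exp (c * LL + 1/2) * (ε / (lam * (L / 2) ^ (1 + ε))) := by
    have hE : ((1 - q) ^ t)⁻¹ ≤ Real.exp (c * LL + 1/2) := by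
      refine le_trans (hexpinv q hq0 hq2) (Real.exp_le_exp.mpr ?_)
      rw [htq]
      linarith
    have hgb : (ε / (q' * Real.log (1 / q) ^ (1 + ε))) * q
        ≤ ε / (lam * (L / 2) ^ (1 + ε)) := by
      have hid : (ε / (q' * Real.log (1 / q) ^ (1 + ε))) * q
          = ε / (lam * Real.log (1 / q) ^ (1 + ε)) := by
        rw [hq']
        have hLq : (0:ℝ) < Real.log (1 / q) ^ (1 + ε) :=
          Real.rpow_pos_of_pos (by linarith) _
        field_simp
      rw [hid]
      apply div_le_div_of_nonneg_left hε.le (by positivity)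
      apply mul_le_mul_of_nonneg_left _ hlam0.le
      exact Real.rpow_le_rpow hL2.le hlogq (by linarith)
    have h2nn : 0 ≤ (ε / (q' * Real.log (1 / q) ^ (1 + ε))) * q := by
      have hLq : (0:ℝ) < Real.log (1 / q) := by linarith
      positivity
    calc ((1 - q) ^ t)⁻¹ * (ε / (q' * Real.log (1 / q) ^ (1 + ε))) * q
        = ((1 - q) ^ t)⁻¹ * ((ε / (q' * Real.log (1 / q) ^ (1 + ε))) * q) := by ring
      _ ≤ Real.exp (c * LL + 1/2) * (ε / (lam * (L / 2) ^ (1 + ε))) := by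
          apply mul_le_mul hE hgb h2nn (Real.exp_pos _).le
  refine ⟨hq0, le_trans hq2 (by norm_num), ?_, integrableOn_pth hε hq0 hq1⟩
  calc (∫ θ in Ioo (0:ℝ) q, pth ε t θ)
      ≤ ((1 - q') ^ t)⁻¹ * ptF ε q'
        + ((1 - q) ^ t)⁻¹ * (ε / (q' * Real.log (1 / q) ^ (1 + ε))) * q :=
        core_upper hε hq'0 hq'q hq1
    _ ≤ Real.exp (ε / 4 * LL + 1/2) * (L / 2) ^ (-ε)
        + Real.exp (c * LL + 1/2) * (ε / (lam * (L / 2) ^ (1 + ε))) :=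
        add_le_add hterm1 hterm2
    _ < 1 / δ := hfin

/-- `p̃_t(δ) = min{1, inf{q ∈ [0, e⁻¹) : ∫_0^q (1−θ)^{−t} · ε/(θ (log(1/θ))^{1+ε}) dθ ≥ 1/δ}}`,
with the convention `inf ∅ = ∞` (so `p̃_t(δ) = 1` when the set is empty). -/
noncomputable def ptilde (ε δ : ℝ) (t : ℕ) : ℝ :=
  letI := Classical.propDecidable
  if ∃ q ∈ Set.Ico (0 : ℝ) (Real.exp (-1)),
      1 / δ ≤ ∫ θ in Set.Ioo (0 : ℝ) q,
        ((1 - θ) ^ t)⁻¹ * (ε / (θ * Real.log (1 / θ) ^ (1 + ε))) then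
    min 1 (sInf {q | q ∈ Set.Ico (0 : ℝ) (Real.exp (-1)) ∧
      1 / δ ≤ ∫ θ in Set.Ioo (0 : ℝ) q,
        ((1 - θ) ^ t)⁻¹ * (ε / (θ * Real.log (1 / θ) ^ (1 + ε)))})
  else 1

lemma integrand_eq (ε : ℝ) (t : ℕ) :
    (fun θ : ℝ => ((1 - θ) ^ t)⁻¹ * (ε / (θ * Real.log (1 / θ) ^ (1 + ε)))) = pth ε t := rfl

lemma ub_ptilde {ε δ : ℝ} (hε : 0 < ε) (hδ : 0 < δ) {c : ℝ} (hc : 1 + ε < c) :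
    ∀ᶠ t : ℕ in atTop, ptilde ε δ t ≤ c * (Real.log (Real.log t) / t) := by
  filter_upwards [ub_event hε hδ hc] with t ht
  obtain ⟨hmem, hint⟩ := ht
  have hex : ∃ q ∈ Set.Ico (0 : ℝ) (Real.exp (-1)),
      1 / δ ≤ ∫ θ in Set.Ioo (0 : ℝ) q,
        ((1 - θ) ^ t)⁻¹ * (ε / (θ * Real.log (1 / θ) ^ (1 + ε))) :=
    ⟨c * (Real.log (Real.log t) / t), hmem, hint⟩
  rw [ptilde, if_pos hex]
  refine le_trans (min_le_right _ _) (csInf_le ⟨0, fun r hr => hr.1.1⟩ ⟨hmem, hint⟩)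

lemma lb_ptilde {ε δ : ℝ} (hε : 0 < ε) (hδ : 0 < δ) {c : ℝ} (hc0 : 0 < c) (hc1 : c < 1) :
    ∀ᶠ t : ℕ in atTop, c * (Real.log (Real.log t) / t) ≤ ptilde ε δ t := by
  filter_upwards [lb_event hε hδ hc0 hc1] with t ht
  obtain ⟨hq0, hq1, hlt, hInt⟩ := ht
  set q : ℝ := c * (Real.log (Real.log t) / t) with hqdef
  have hkey : ∀ r ∈ {r | r ∈ Set.Ico (0 : ℝ) (Real.exp (-1)) ∧
      1 / δ ≤ ∫ θ in Set.Ioo (0 : ℝ) r,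
        ((1 - θ) ^ t)⁻¹ * (ε / (θ * Real.log (1 / θ) ^ (1 + ε)))}, q ≤ r := by
    rintro r ⟨hr1, hr2⟩
    by_contra hcon
    push_neg at hcon
    have hsub : Ioo (0:ℝ) r ⊆ Ioo (0:ℝ) q := Ioo_subset_Ioo le_rfl hcon.le
    have hmono : (∫ θ in Ioo (0:ℝ) r, pth ε t θ) ≤ ∫ θ in Ioo (0:ℝ) q, pth ε t θ := by
      refine setIntegral_mono_set hInt ?_ (HasSubset.Subset.eventuallyLE hsub)
      filter_upwards [ae_restrict_mem measurableSet_Ioo] with x hx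
      exact pth_nonneg hε hx.1 (lt_of_lt_of_le hx.2 hq1)
    rw [integrand_eq] at hr2
    exact absurd (le_trans hr2 hmono) (not_le.mpr hlt)
  rw [ptilde]
  split_ifs with hex
  · refine le_min hq1 (le_csInf ?_ hkey)
    obtain ⟨r, hr1, hr2⟩ := hex
    exact ⟨r, hr1, hr2⟩
  · exact hq1

/-- For `ε > 0` and `δ ∈ (0,1)`, asymptotically
`1 ≤ liminf_t p̃_t(δ)/((log log t)/t)` and `limsup_t p̃_t(δ)/((log log t)/t) ≤ 1 + ε`. -/
theorem ptilde_asymptotics (ε δ : ℝ) (hε : 0 < ε) (hδ : δ ∈ Set.Ioo (0 : ℝ) 1) :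
    1 ≤ liminf (fun t : ℕ => ptilde ε δ t / (Real.log (Real.log t) / t)) atTop ∧
    limsup (fun t : ℕ => ptilde ε δ t / (Real.log (Real.log t) / t)) atTop ≤ 1 + ε := by
  set u : ℕ → ℝ := fun t => ptilde ε δ t / (Real.log (Real.log t) / t) with hu
  have hδ0 : 0 < δ := hδ.1
  have hrpos : ∀ᶠ t : ℕ in atTop, 0 < Real.log (Real.log t) / t := by
    filter_upwards [tendsto_LL.eventually_gt_atTop 0, eventually_gt_atTop 0] with t h1 h2
    have : (0:ℝ) < t := by exact_mod_cast h2
    positivity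
  have hub : ∀ c : ℝ, 1 + ε < c → ∀ᶠ t in atTop, u t ≤ c := by
    intro c hc
    filter_upwards [ub_ptilde hε hδ0 hc, hrpos] with t h1 h2
    rw [hu, div_le_iff₀ h2]
    linarith [h1]
  have hlb : ∀ c : ℝ, 0 < c → c < 1 → ∀ᶠ t in atTop, c ≤ u t := by
    intro c hc0 hc1
    filter_upwards [lb_ptilde hε hδ0 hc0 hc1, hrpos] with t h1 h2
    rw [hu, le_div_iff₀ h2]
    linarith [h1]
  have hupper : ∀ᶠ t in atTop, u t ≤ 2 + ε := hub (2 + ε) (by linarith)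
  have hlower : ∀ᶠ t in atTop, (1:ℝ)/2 ≤ u t := hlb (1/2) (by norm_num) (by norm_num)
  constructor
  · by_contra hcon
    push_neg at hcon
    set l := liminf u atTop with hl
    have hc1 : l < 1 := hcon
    obtain ⟨c, hc0, hcl, hcc1⟩ : ∃ c : ℝ, 0 < c ∧ l < c ∧ c < 1 := by
      refine ⟨max (1/2) ((l+1)/2), lt_of_lt_of_le (by norm_num) (le_max_left _ _), ?_, ?_⟩
      · apply lt_max_iff.mpr
        right
        linarith
      · apply max_lt (by norm_num)
        linarith
    have := le_liminf_of_le (isCoboundedUnder_ge_of_eventually_le atTop hupper)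
      (hlb c hc0 hcc1)
    rw [← hl] at this
    linarith
  · by_contra hcon
    push_neg at hcon
    set l := limsup u atTop with hl
    obtain ⟨c, hcε, hcl⟩ : ∃ c : ℝ, 1 + ε < c ∧ c < l :=
      ⟨(1 + ε + l)/2, by linarith, by linarith⟩
    have := limsup_le_of_le (isCoboundedUnder_le_of_eventually_le atTop hlower)
      (hub c hcε)
    rw [← hl] at this
    linarith
end

section
/- Let Q be a random variable taking values in [0,1] with a density f (with respect to Lebesgue measure), and suppose there exists a ∈ (0,1) such that f is non-decreasing on [0, a]. Then for every u ∈ (0, a] with P(Q < u) > 0, the conditional expected improvement satisfies E[u − Q | Q < u] ≤ u/2. -/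
/-!
On `[0, u]` the density is non-decreasing, so the weight `x - u/2` is paired with values of `f`
that are at least `f (u/2)` where the weight is positive and at most `f (u/2)` where it is
negative. Hence `∫₀ᵘ (x - u/2) f(x) dx ≥ f(u/2) ∫₀ᵘ (x - u/2) dx = 0`, i.e. the mass of `Q` below
`u` is centred to the right of `u/2`, which is `E[(u - Q) 1{Q < u}] ≤ (u/2) P(Q < u)`.
-/

open MeasureTheory Set

section MonotoneDensity

variable {f : ℝ → ℝ} {a b : ℝ}

theorem MonotoneOn.integral_mul_sub_midpoint_nonneg (hab : a ≤ b) (hf : MonotoneOn f (Icc a b)) :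
    0 ≤ ∫ x in a..b, f x * (x - (a + b) / 2) := by
  set m := (a + b) / 2 with hm_def
  have hm : m ∈ Icc a b := ⟨by linarith, by linarith⟩
  have hweight : ∫ x in a..b, f m * (x - m) = 0 := by
    rw [intervalIntegral.integral_const_mul, intervalIntegral.integral_comp_sub_right
      (fun x => x), integral_id]
    ring
  have hf_int : IntervalIntegrable f volume a b := (uIcc_of_le hab ▸ hf).intervalIntegrable
  calc 0 = ∫ x in a..b, f m * (x - m) := hweight.symm
    _ ≤ ∫ x in a..b, f x * (x - m) := by
      refine intervalIntegral.integral_mono_on hab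
        (Continuous.intervalIntegrable (by fun_prop) _ _)
        (hf_int.mul_continuousOn (by fun_prop)) fun x hx => ?_
      rcases le_total x m with hxm | hmx
      · exact mul_le_mul_of_nonpos_right (hf hx hm hxm) (by linarith)
      · exact mul_le_mul_of_nonneg_right (hf hm hx hmx) (by linarith)

theorem MonotoneOn.integral_mul_sub_le_half_mul_integral (hab : a ≤ b)
    (hf : MonotoneOn f (Icc a b)) :
    ∫ x in a..b, f x * (b - x) ≤ (b - a) / 2 * ∫ x in a..b, f x := by
  have hf_int : IntervalIntegrable f volume a b := (uIcc_of_le hab ▸ hf).intervalIntegrable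
  have hsplit : ∫ x in a..b, f x * (b - x)
      = (b - a) / 2 * (∫ x in a..b, f x) - ∫ x in a..b, f x * (x - (a + b) / 2) := by
    rw [← intervalIntegral.integral_const_mul, ← intervalIntegral.integral_sub
      (hf_int.const_mul _) (hf_int.mul_continuousOn (by fun_prop))]
    congr 1 with x
    ring
  linarith [hf.integral_mul_sub_midpoint_nonneg hab]

end MonotoneDensity

theorem setIntegral_Ico_withDensity_ofReal_eq {f : ℝ → ℝ} (hf : Measurable f) (hf₀ : ∀ x, 0 ≤ f x)
    {a b : ℝ} (hab : a ≤ b) (g : ℝ → ℝ) :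
    ∫ x in Ico a b, g x ∂volume.withDensity (fun x => ENNReal.ofReal (f x))
      = ∫ x in a..b, f x * g x := by
  rw [setIntegral_withDensity_eq_setIntegral_toReal_smul hf.ennreal_ofReal
    (ae_of_all _ fun _ => ENNReal.ofReal_lt_top) g measurableSet_Ico,
    integral_Ico_eq_integral_Ioo, ← integral_Ioc_eq_integral_Ioo,
    ← intervalIntegral.integral_of_le hab]
  simp only [ENNReal.toReal_ofReal (hf₀ _), smul_eq_mul]

theorem cei_bound_monotone_density_general {Ω : Type*} [MeasurableSpace Ω] (P : Measure Ω)
    (Q : Ω → ℝ) (hmeas : Measurable Q)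
    (hbdd : ∀ ω, Q ω ∈ Set.Icc (0 : ℝ) 1)
    (f : ℝ → ℝ) (hf_nonneg : ∀ x, 0 ≤ f x) (hf_meas : Measurable f)
    (hdensity : Measure.map Q P = volume.withDensity fun x => ENNReal.ofReal (f x))
    (a : ℝ)
    (hmono : MonotoneOn f (Set.Icc 0 a)) :
    ∀ u : ℝ, 0 < u → u ≤ a → P {ω | Q ω < u} ≠ 0 →
      (∫ ω, (if Q ω < u then u - Q ω else 0) ∂P) / (P {ω | Q ω < u}).toReal ≤ u / 2 := by
  intro u hu hua _
  have hnum : ∫ ω, (if Q ω < u then u - Q ω else 0) ∂P = ∫ x in 0..u, f x * (u - x) := by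
    rw [← setIntegral_Ico_withDensity_ofReal_eq hf_meas hf_nonneg hu.le, ← hdensity,
      ← integral_indicator measurableSet_Ico,
      integral_map hmeas.aemeasurable
      ((Measurable.indicator (by fun_prop) measurableSet_Ico).aestronglyMeasurable)]
    congr 1 with ω
    simp [indicator, (hbdd ω).1]
  have hden : (P {ω | Q ω < u}).toReal = ∫ x in 0..u, f x := by
    have hset : {ω | Q ω < u} = Q ⁻¹' Ico 0 u := by
      ext ω
      simp [(hbdd ω).1]
    simpa [hset, ← Measure.map_apply hmeas measurableSet_Ico, hdensity, Measure.real] using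
      setIntegral_Ico_withDensity_ofReal_eq hf_meas hf_nonneg hu.le (fun _ => 1)
  refine div_le_of_le_mul₀ ENNReal.toReal_nonneg (by positivity) ?_
  rw [hnum, hden]
  simpa using
    (hmono.mono (Icc_subset_Icc_right hua)).integral_mul_sub_le_half_mul_integral hu.le

/-- If `Q` takes values in `[0,1]` and has a density `f` (w.r.t. Lebesgue
measure) that is non-decreasing on `[0, a]` for some `a ∈ (0,1)`, then for every
`u ∈ (0, a]` with `P(Q < u) > 0`, the conditional expected improvement satisfies
`E[u − Q | Q < u] ≤ u/2`. -/
theorem cei_bound_monotone_density {Ω : Type*} [MeasurableSpace Ω] (P : Measure Ω)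
    [IsProbabilityMeasure P] (Q : Ω → ℝ) (hmeas : Measurable Q)
    (hbdd : ∀ ω, Q ω ∈ Set.Icc (0 : ℝ) 1)
    (f : ℝ → ℝ) (hf_nonneg : ∀ x, 0 ≤ f x) (hf_meas : Measurable f)
    (hdensity : Measure.map Q P = volume.withDensity fun x => ENNReal.ofReal (f x))
    (a : ℝ) (ha : a ∈ Set.Ioo (0 : ℝ) 1)
    (hmono : MonotoneOn f (Set.Icc 0 a)) :
    ∀ u : ℝ, 0 < u → u ≤ a → P {ω | Q ω < u} ≠ 0 →
      (∫ ω, (if Q ω < u then u - Q ω else 0) ∂P) / (P {ω | Q ω < u}).toReal ≤ u / 2 :=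
  cei_bound_monotone_density_general P Q hmeas hbdd f hf_nonneg hf_meas hdensity a hmono
end

section
/- Fix ε > 0 and δ ∈ (0,1). For each sufficiently large t, let z_t > 1 be the unique real number satisfying (ε/(log t)^{1+ε}) · ∫_1^{z_t} (e^v/v) dv = 1/δ. Then z_t is asymptotically equivalent to (1+ε) log log t; that is, lim_{t → ∞} z_t / ((1+ε) log log t) = 1. -/
open MeasureTheory Filter

private lemma log_le_half {x : ℝ} (hx : 0 < x) : Real.log x ≤ x / 2 := by
  have hs : 0 < Real.sqrt x := Real.sqrt_pos.2 hx
  have h1 : Real.log (Real.sqrt x) ≤ Real.sqrt x - 1 := Real.log_le_sub_one_of_pos hs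
  have h2 : Real.log (Real.sqrt x) = Real.log x / 2 := by
    rw [Real.log_sqrt hx.le]
  have h3 : Real.sqrt x ^ 2 = x := Real.sq_sqrt hx.le
  nlinarith [sq_nonneg (Real.sqrt x - 2)]

private lemma intF (z : ℝ) (hz : 1 ≤ z) :
    IntervalIntegrable (fun v => Real.exp v / v) volume 1 z := by
  apply ContinuousOn.intervalIntegrable
  apply Real.continuous_exp.continuousOn.div continuousOn_id
  intro x hx
  rw [Set.uIcc_of_le hz] at hx
  have := hx.1
  intro h; simp only [id] at h; linarith

private lemma F_le {z : ℝ} (hz : 1 ≤ z) :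
    (∫ v in Set.Ioc (1 : ℝ) z, Real.exp v / v) ≤ Real.exp z := by
  rw [← intervalIntegral.integral_of_le hz]
  calc ∫ v in (1:ℝ)..z, Real.exp v / v ≤ ∫ v in (1:ℝ)..z, Real.exp v := by
        apply intervalIntegral.integral_mono_on hz (intF z hz)
          (Real.continuous_exp.intervalIntegrable 1 z)
        intro x hx
        exact div_le_self (Real.exp_pos x).le hx.1
    _ = Real.exp z - Real.exp 1 := by rw [integral_exp]
    _ ≤ Real.exp z := by linarith [Real.exp_pos 1]

private lemma F_ge {z : ℝ} (hz : 2 ≤ z) :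
    Real.exp z / (2 * z) ≤ ∫ v in Set.Ioc (1 : ℝ) z, Real.exp v / v := by
  have h1z : (1:ℝ) ≤ z := by linarith
  have hzpos : (0:ℝ) < z := by linarith
  rw [← intervalIntegral.integral_of_le h1z]
  have he2 : 2 ≤ Real.exp 1 := by linarith [Real.add_one_le_exp (1:ℝ)]
  have hez : 2 * Real.exp 1 ≤ Real.exp z := by
    have : Real.exp 1 * Real.exp 1 ≤ Real.exp z := by
      rw [← Real.exp_add]
      exact Real.exp_le_exp.2 (by linarith)
    nlinarith [Real.exp_pos (1:ℝ)]
  calc Real.exp z / (2 * z) ≤ (Real.exp z - Real.exp 1) / z := by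
        rw [div_le_div_iff₀ (by positivity) hzpos]
        nlinarith [mul_le_mul_of_nonneg_right hez hzpos.le]
    _ = ∫ v in (1:ℝ)..z, Real.exp v / z := by
        rw [intervalIntegral.integral_div, integral_exp]
    _ ≤ ∫ v in (1:ℝ)..z, Real.exp v / v := by
        apply intervalIntegral.integral_mono_on h1z
          ((Real.continuous_exp.div_const z).intervalIntegrable 1 z) (intF z h1z)
        intro x hx
        have hx0 : 0 < x := by linarith [hx.1]
        gcongr
        exact hx.2

/-- Fix `ε > 0` and `δ ∈ (0,1)`.  If, for all sufficiently large `t`,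
`z_t > 1` satisfies `(ε/(log t)^{1+ε}) · ∫_1^{z_t} (e^v/v) dv = 1/δ`, then
`z_t` is asymptotically equivalent to `(1+ε) log log t`. -/
theorem implicit_mixture_threshold_asymptotic (ε δ : ℝ) (hε : 0 < ε)
    (hδ : δ ∈ Set.Ioo (0 : ℝ) 1) (z : ℕ → ℝ)
    (hz : ∀ᶠ t : ℕ in atTop, 1 < z t ∧
      (ε / Real.log t ^ (1 + ε)) * ∫ v in Set.Ioc (1 : ℝ) (z t), Real.exp v / v = 1 / δ) :
    Tendsto (fun t : ℕ => z t / ((1 + ε) * Real.log (Real.log t))) atTop (nhds 1) := by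
  obtain ⟨hδ0, hδ1⟩ := hδ
  have hεδ : 0 < ε * δ := mul_pos hε hδ0
  set c : ℝ := Real.log 2 with hc
  set K : ℝ := Real.log (ε * δ) with hK
  set D : ℕ → ℝ := fun t => (1 + ε) * Real.log (Real.log t) with hD
  set L : ℕ → ℝ := fun t => D t - K with hL
  set M : ℕ → ℝ := fun t => L t + c + Real.log (2 * L t + 2 * c) with hM
  -- D tends to atTop
  have hD_top : Tendsto D atTop atTop := by
    apply Tendsto.const_mul_atTop (by linarith : (0:ℝ) < 1 + ε)
    exact Real.tendsto_log_atTop.comp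
      (Real.tendsto_log_atTop.comp tendsto_natCast_atTop_atTop)
  have hL_top : Tendsto L atTop atTop := tendsto_atTop_add_const_right _ (-K)
    (by simpa [sub_eq_add_neg] using hD_top)
  -- eventual bounds L ≤ z ≤ M
  have hlog1 : ∀ᶠ t : ℕ in atTop, 1 < Real.log t :=
    (Real.tendsto_log_atTop.comp tendsto_natCast_atTop_atTop).eventually_gt_atTop 1
  have hbound : ∀ᶠ t : ℕ in atTop, L t ≤ z t ∧ z t ≤ M t := by
    filter_upwards [hz, hlog1, hL_top.eventually_ge_atTop 4] with t ht hlt hL4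
    obtain ⟨h1, heq⟩ := ht
    have hlogpos : 0 < Real.log t := by linarith
    set P : ℝ := Real.log t ^ (1 + ε) with hP
    have hPpos : 0 < P := Real.rpow_pos_of_pos hlogpos _
    have hF : (∫ v in Set.Ioc (1 : ℝ) (z t), Real.exp v / v) = P / (ε * δ) := by
      field_simp at heq ⊢
      nlinarith [heq]
    have hlogP : Real.log (P / (ε * δ)) = L t := by
      rw [Real.log_div hPpos.ne' hεδ.ne', hP, Real.log_rpow hlogpos]
    -- lower bound: L t ≤ z t
    have hup : P / (ε * δ) ≤ Real.exp (z t) := hF ▸ F_le h1.le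
    have hLz : L t ≤ z t := by
      have := Real.log_le_log (by positivity) hup
      rwa [hlogP, Real.log_exp] at this
    refine ⟨hLz, ?_⟩
    have hz4 : 4 ≤ z t := by linarith
    have hzpos : 0 < z t := by linarith
    -- upper bound
    have hlow : Real.exp (z t) / (2 * z t) ≤ P / (ε * δ) := hF ▸ F_ge (by linarith)
    have h5 : z t - (c + Real.log (z t)) ≤ L t := by
      have hl := Real.log_le_log (by positivity) hlow
      rwa [Real.log_div (Real.exp_pos _).ne' (by positivity), Real.log_exp,
        Real.log_mul two_ne_zero hzpos.ne', hlogP] at hl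
    have h6 : z t ≤ 2 * L t + 2 * c := by
      have := log_le_half hzpos
      linarith
    have h7 : Real.log (z t) ≤ Real.log (2 * L t + 2 * c) :=
      Real.log_le_log hzpos h6
    simp only [hM]
    linarith
  -- limits of L/D and M/D
  have hKD : Tendsto (fun t => K / D t) atTop (nhds 0) := tendsto_const_nhds.div_atTop hD_top
  have hcD : Tendsto (fun t => c / D t) atTop (nhds 0) := tendsto_const_nhds.div_atTop hD_top
  have hLD : Tendsto (fun t => L t / D t) atTop (nhds 1) := by
    have : Tendsto (fun t => 1 - K / D t) atTop (nhds (1 - 0)) :=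
      tendsto_const_nhds.sub hKD
    rw [sub_zero] at this
    apply this.congr'
    filter_upwards [hD_top.eventually_gt_atTop 0] with t ht
    field_simp [hL]
    rfl
  -- log(2x+2c)/x → 0
  have key : Tendsto (fun x : ℝ => Real.log (2 * x + 2 * c) / x) atTop (nhds 0) := by
    have h1 : Tendsto (fun x : ℝ => 2 * x + 2 * c) atTop atTop :=
      tendsto_atTop_add_const_right _ _ (tendsto_id.const_mul_atTop two_pos)
    have h2 : Tendsto (fun x : ℝ => Real.log (2 * x + 2 * c) / (2 * x + 2 * c))
        atTop (nhds 0) :=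
      (Real.isLittleO_log_id_atTop.tendsto_div_nhds_zero).comp h1
    have h3 : Tendsto (fun x : ℝ => (2 * x + 2 * c) / x) atTop (nhds 2) := by
      have : Tendsto (fun x : ℝ => 2 + 2 * c / x) atTop (nhds (2 + 0)) :=
        tendsto_const_nhds.add (tendsto_const_nhds.div_atTop tendsto_id)
      rw [add_zero] at this
      apply this.congr'
      filter_upwards [eventually_gt_atTop (0:ℝ)] with x hx
      field_simp
    have := h2.mul h3
    rw [zero_mul] at this
    apply this.congr'
    filter_upwards [h1.eventually_gt_atTop 0, eventually_gt_atTop (0:ℝ)] with x hx1 hx2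
    field_simp
    exact mul_div_cancel_left₀ _ (by linarith : (0:ℝ) < x + c).ne'
  have hlogterm : Tendsto (fun t => Real.log (2 * L t + 2 * c) / D t) atTop (nhds 0) := by
    have h1 : Tendsto (fun t => Real.log (2 * L t + 2 * c) / L t) atTop (nhds 0) :=
      key.comp hL_top
    have := h1.mul hLD
    rw [zero_mul] at this
    apply this.congr'
    filter_upwards [hL_top.eventually_gt_atTop 0, hD_top.eventually_gt_atTop 0] with t h1 h2
    field_simp
  have hMD : Tendsto (fun t => M t / D t) atTop (nhds 1) := by
    have : Tendsto (fun t => L t / D t + c / D t + Real.log (2 * L t + 2 * c) / D t)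
        atTop (nhds (1 + 0 + 0)) := (hLD.add hcD).add hlogterm
    rw [add_zero, add_zero] at this
    apply this.congr
    intro t
    simp only [hM]
    ring
  -- squeeze
  refine tendsto_of_tendsto_of_tendsto_of_le_of_le' hLD hMD ?_ ?_
  · filter_upwards [hbound, hD_top.eventually_gt_atTop 0] with t ht hDpos
    exact div_le_div_of_nonneg_right ht.1 hDpos.le
  · filter_upwards [hbound, hD_top.eventually_gt_atTop 0] with t ht hDpos
    exact div_le_div_of_nonneg_right ht.2 hDpos.le
end
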